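/- arXiv:1112.1289 — 7 statements merged into one kernel-verified Lean document; each statement's English description precedes it below -/
import Mathlib

section
/- Let X be a complex separable Fréchet space, T : X → X a continuous linear operator, and P a family of finite positive Borel measures on 𝕋; call a set D ⊆ 𝕋 P-small if σ(D) = 0 (outer measure) for every σ ∈ P. Assume that for every analytic P-small set D ⊆ 𝕋 the linear span of ⋃_{λ ∈ 𝕋∖D} ker(T − λ·id) is dense in X. Let V = {(x,λ) ∈ X × 𝕋 : x ≠ 0 and Tx = λx}. Then there exists a set Z ⊆ V, closed in the subspace topology of V, such that: (1) for every relatively open set O ⊆ V with O ∩ Z ≠ ∅, the set {λ ∈ 𝕋 : ∃x, (x,λ) ∈ O ∩ Z} is not P-small; (2) the linear span of {x ∈ X : ∃λ ∈ 𝕋, (x,λ) ∈ Z} is dense in X. -/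
open MeasureTheory Filter Topology

noncomputable instance : MeasurableSpace Circle := borel Circle
instance : BorelSpace Circle := ⟨rfl⟩

/-- `D` is `P`-small: it is annihilated by every measure of the family `P`. -/
def PSmall (P : Set (Measure Circle)) (D : Set Circle) : Prop :=
  ∀ σ ∈ P, σ D = 0

/-- **Bayart–Matheron, Lemma 3.4 (exhaustion lemma).** -/
theorem exhaustion_lemma
    {X : Type*} [AddCommGroup X] [Module ℂ X] [TopologicalSpace X]
    [IsTopologicalAddGroup X] [ContinuousSMul ℂ X] [LocallyConvexSpace ℝ X] [PolishSpace X]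
    (T : X →L[ℂ] X)
    (P : Set (Measure Circle)) (hP : ∀ σ ∈ P, IsFiniteMeasure σ)
    (hspan : ∀ D : Set Circle, AnalyticSet D → PSmall P D →
      Dense (↑(Submodule.span ℂ
        (⋃ z : Circle, ⋃ (_ : z ∉ D), {x : X | T x = (z : ℂ) • x})) : Set X)) :
    ∃ Z : Set (X × Circle),
      Z ⊆ {p : X × Circle | p.1 ≠ 0 ∧ T p.1 = (p.2 : ℂ) • p.1} ∧
      closure Z ∩ {p : X × Circle | p.1 ≠ 0 ∧ T p.1 = (p.2 : ℂ) • p.1} = Z ∧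
      (∀ O : Set (X × Circle), IsOpen O → (O ∩ Z).Nonempty →
        ¬ PSmall P {z : Circle | ∃ x : X, (x, z) ∈ O ∩ Z}) ∧
      Dense (↑(Submodule.span ℂ {x : X | ∃ z : Circle, (x, z) ∈ Z}) : Set X) := by
  classical
  set V : Set (X × Circle) := {p : X × Circle | p.1 ≠ 0 ∧ T p.1 = (p.2 : ℂ) • p.1} with hVdef
  set G : Set (Set (X × Circle)) :=
    {U | IsOpen U ∧ PSmall P {z : Circle | ∃ x : X, (x, z) ∈ U ∩ V}} with hGdef
  set W : Set (X × Circle) := ⋃₀ G with hWdef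
  have hWopen : IsOpen W := isOpen_sUnion fun U hU => hU.1
  -- the eigenvalue projection of W ∩ V is P-small
  have hWsmall : PSmall P {z : Circle | ∃ x : X, (x, z) ∈ W ∩ V} := by
    obtain ⟨Tc, hTcCount, hTcG, hTcUnion⟩ :=
      TopologicalSpace.isOpen_sUnion_countable G (fun U hU => hU.1)
    intro σ hσ
    have hsub : {z : Circle | ∃ x : X, (x, z) ∈ W ∩ V} ⊆
        ⋃ U ∈ Tc, {z : Circle | ∃ x : X, (x, z) ∈ U ∩ V} := by
      rintro z ⟨x, hxW, hxV⟩
      have hxW' : (x, z) ∈ ⋃₀ Tc := by rw [hTcUnion]; exact hxW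
      obtain ⟨U, hU, hxU⟩ := hxW'
      exact Set.mem_biUnion hU ⟨x, hxU, hxV⟩
    refine measure_mono_null hsub ?_
    refine (measure_biUnion_null_iff hTcCount).2 fun U hU => ?_
    exact (hTcG hU).2 σ hσ
  refine ⟨V \ W, Set.diff_subset, ?_, ?_, ?_⟩
  · -- relative closedness
    apply Set.Subset.antisymm
    · rintro p ⟨hpc, hpV⟩
      refine ⟨hpV, fun hpW => ?_⟩
      have hcl : closure (V \ W) ⊆ Wᶜ :=
        closure_minimal (fun q hq => hq.2) hWopen.isClosed_compl
      exact hcl hpc hpW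
    · exact fun p hp => ⟨subset_closure hp, hp.1⟩
  · -- non-smallness on relatively open pieces
    intro O hO ⟨p, hpO, hpZ⟩ hsmall
    have hOG : O ∈ G := by
      refine ⟨hO, fun σ hσ => ?_⟩
      have hsub : {z : Circle | ∃ x : X, (x, z) ∈ O ∩ V} ⊆
          {z : Circle | ∃ x : X, (x, z) ∈ O ∩ (V \ W)} ∪
          {z : Circle | ∃ x : X, (x, z) ∈ W ∩ V} := by
        rintro z ⟨x, hxO, hxV⟩
        by_cases hxW : (x, z) ∈ W
        · exact Or.inr ⟨x, hxW, hxV⟩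
        · exact Or.inl ⟨x, hxO, hxV, hxW⟩
      refine measure_mono_null hsub (measure_union_null ?_ ?_)
      · exact hsmall σ hσ
      · exact hWsmall σ hσ
    exact hpZ.2 (Set.subset_sUnion_of_mem hOG hpO)
  · -- density
    letI : MeasurableSpace (X × Circle) := borel (X × Circle)
    haveI : BorelSpace (X × Circle) := ⟨rfl⟩
    set D : Set Circle := {z : Circle | ∃ x : X, (x, z) ∈ W ∩ V} with hDdef
    have hVclosed : IsClosed {p : X × Circle | T p.1 = (p.2 : ℂ) • p.1} :=
      isClosed_eq (T.continuous.comp continuous_fst)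
        ((continuous_subtype_val.comp continuous_snd).smul continuous_fst)
    have hmeas : MeasurableSet (W ∩ V) := by
      have : W ∩ V = (W ∩ {p : X × Circle | p.1 ≠ 0}) ∩
          {p : X × Circle | T p.1 = (p.2 : ℂ) • p.1} := by
        ext p; constructor
        · rintro ⟨h1, h2, h3⟩; exact ⟨⟨h1, h2⟩, h3⟩
        · rintro ⟨⟨h1, h2⟩, h3⟩; exact ⟨h1, h2, h3⟩
      rw [this]
      exact ((hWopen.inter (isOpen_compl_singleton.preimage continuous_fst)).measurableSet).inter
        hVclosed.measurableSet
    have hDeq : D = Prod.snd '' (W ∩ V) := by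
      ext z; constructor
      · rintro ⟨x, hx⟩; exact ⟨(x, z), hx, rfl⟩
      · rintro ⟨p, hp, rfl⟩; exact ⟨p.1, hp⟩
    have hDan : AnalyticSet D := by
      rw [hDeq]
      exact hmeas.analyticSet.image_of_continuous continuous_snd
    have hdense := hspan D hDan hWsmall
    refine hdense.mono (SetLike.coe_subset_coe.2 (Submodule.span_le.2 ?_))
    rintro x hx
    simp only [Set.mem_iUnion, Set.mem_setOf_eq] at hx
    obtain ⟨z, hzD, hTx⟩ := hx
    by_cases hx0 : x = 0
    · simp [hx0]
    · refine Submodule.subset_span ⟨z, ⟨hx0, hTx⟩, fun hW => ?_⟩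
      exact hzD ⟨x, hW, hx0, hTx⟩
end

section
/- Let X be a complex separable Fréchet space, T : X → X a continuous linear operator, and P a family of finite positive Borel measures on 𝕋 which is hereditary with respect to absolute continuity (if σ ∈ P and σ' is a finite positive Borel measure with σ' absolutely continuous with respect to σ, then σ' ∈ P). Call D ⊆ 𝕋 P-small if σ(D) = 0 (outer measure) for every σ ∈ P, and call a closed set Λ ⊆ 𝕋 P-perfect if V ∩ Λ is not P-small for every open V ⊆ 𝕋 with V ∩ Λ ≠ ∅. Then the following are equivalent: (i) for every analytic P-small set D ⊆ 𝕋, the linear span of ⋃_{λ ∈ 𝕋∖D} ker(T − λ·id) is dense in X; (ii) there exists a countable family of continuous maps E_i : Λ_i → X (i ∈ ℕ), where each Λ_i ⊆ 𝕋 is a closed P-perfect set, such that T(E_i(λ)) = λ·E_i(λ) for all i and λ ∈ Λ_i, and the linear span of ⋃_i E_i(Λ_i) is dense in X. -/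
open MeasureTheory Filter Topology

/-- A closed set `Λ ⊆ 𝕋` is `P`-perfect if `V ∩ Λ` is not `P`-small for any open `V`
meeting `Λ`. -/
def PPerfect (P : Set (Measure Circle)) (Λ : Set Circle) : Prop :=
  ∀ V : Set Circle, IsOpen V → (V ∩ Λ).Nonempty → ¬ PSmall P (V ∩ Λ)

open Set

section Auxiliary

lemma BM_half_pow (n : ℕ) : (2⁻¹ : ENNReal) ^ (n+1) + 2⁻¹ ^ (n+1) = 2⁻¹ ^ n := by
  rw [← two_mul, pow_succ, ← mul_assoc, mul_comm (2 : ENNReal), mul_assoc,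
    ENNReal.mul_inv_cancel two_ne_zero ENNReal.ofNat_ne_top, mul_one]

lemma BM_geom_sum (c : ENNReal) (n : ℕ) :
    (Finset.range n).sum (fun k => c * 2⁻¹ ^ (k+1)) ≤ c := by
  have key : ∀ m : ℕ, (Finset.range m).sum (fun k => c * 2⁻¹ ^ (k+1)) + c * 2⁻¹ ^ m = c := by
    intro m
    induction m with
    | zero => simp
    | succ m ih =>
      rw [Finset.sum_range_succ, add_assoc, ← mul_add, BM_half_pow, ih]
  exact le_of_le_of_eq (le_add_right le_rfl) (key n)

/-- Capacitability-style core: the image of a suitable compact subset of Baire space keeps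
positive outer measure. -/
lemma BM_cap {α : Type*} [MetricSpace α] [MeasurableSpace α] [BorelSpace α]
    (σ : Measure α) [IsFiniteMeasure σ] (g : (ℕ → ℕ) → α) (hg : Continuous g)
    (hpos : σ (range g) ≠ 0) :
    ∃ B : Set (ℕ → ℕ), IsCompact B ∧ σ (g '' B) ≠ 0 := by
  classical
  set ε := σ (range g) with hε
  have hεtop : ε ≠ ⊤ := measure_ne_top σ _
  have hhalf : ε / 2 < ε := ENNReal.half_lt_self hpos hεtop
  -- the predicate
  set Q : (ℕ → ℕ) → ℕ → Prop :=
    fun f n => ε / 2 < σ (g '' {β : ℕ → ℕ | ∀ k, k < n → β k ≤ f k}) with hQ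
  have hQ0 : Q (fun _ => 0) 0 := by
    have : {β : ℕ → ℕ | ∀ k, k < 0 → β k ≤ 0} = univ := by
      ext β; simp
    simpa [hQ, this, image_univ] using hhalf
  have hstep : ∀ (f : ℕ → ℕ) (n : ℕ), Q f n → ∃ m : ℕ, Q (Function.update f n m) (n+1) := by
    intro f n hQn
    set s : ℕ → Set (ℕ → ℕ) :=
      fun m => {β : ℕ → ℕ | ∀ k, k < n → β k ≤ f k} ∩ {β | β n ≤ m} with hs
    have hmono : Monotone fun m => g '' s m := by
      intro a b hab
      exact image_mono (inter_subset_inter_right _ (fun β hβ => le_trans hβ hab))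
    have hsu : (⋃ m, s m) = {β : ℕ → ℕ | ∀ k, k < n → β k ≤ f k} := by
      ext β
      simp only [hs, mem_iUnion, mem_inter_iff, mem_setOf_eq]
      exact ⟨fun ⟨m, hm, _⟩ => hm, fun h => ⟨β n, h, le_rfl⟩⟩
    have hunion : ⋃ m, g '' s m = g '' {β : ℕ → ℕ | ∀ k, k < n → β k ≤ f k} := by
      rw [← image_iUnion, hsu]
    have htend : Tendsto (fun m => σ (g '' s m)) atTop
        (𝓝 (σ (g '' {β : ℕ → ℕ | ∀ k, k < n → β k ≤ f k}))) := by
      have := tendsto_measure_iUnion_atTop (μ := σ) hmono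
      rwa [hunion] at this
    have hev : ∀ᶠ m in atTop, ε / 2 < σ (g '' s m) :=
      htend.eventually (eventually_gt_nhds hQn)
    obtain ⟨m, hm⟩ := hev.exists
    refine ⟨m, ?_⟩
    have hset : {β : ℕ → ℕ | ∀ k, k < n + 1 → β k ≤ Function.update f n m k} = s m := by
      ext β
      simp only [hs, mem_setOf_eq, mem_inter_iff]
      constructor
      · intro h
        refine ⟨fun k hk => ?_, ?_⟩
        · have := h k (Nat.lt_succ_of_lt hk)
          rwa [Function.update_of_ne (Nat.ne_of_lt hk)] at this
        · have := h n (Nat.lt_succ_self n)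
          rwa [Function.update_self] at this
      · intro ⟨h1, h2⟩ k hk
        rcases Nat.lt_succ_iff_lt_or_eq.1 hk with hk' | rfl
        · rw [Function.update_of_ne (Nat.ne_of_lt hk')]; exact h1 k hk'
        · rwa [Function.update_self]
    simpa only [hQ, hset] using hm
  -- recursive construction of the bounds
  let seq : ∀ n : ℕ, {f : ℕ → ℕ // Q f n} := fun n =>
    Nat.rec ⟨fun _ => 0, hQ0⟩
      (fun n p => ⟨Function.update p.1 n (hstep p.1 n p.2).choose,
        (hstep p.1 n p.2).choose_spec⟩) n
  set M : ℕ → ℕ := fun n => (seq (n+1)).1 n with hM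
  have hseq : ∀ n, (seq (n+1)).1 = Function.update (seq n).1 n
      (hstep (seq n).1 n (seq n).2).choose := fun n => rfl
  have hstable : ∀ n k, k < n → (seq n).1 k = M k := by
    intro n
    induction n with
    | zero => intro k hk; omega
    | succ n ih =>
      intro k hk
      rcases Nat.lt_succ_iff_lt_or_eq.1 hk with hk' | rfl
      · have h1 : (seq (n+1)).1 k = (seq n).1 k := by
          rw [hseq]; exact Function.update_of_ne (by omega) _ _
        rw [h1, ih k hk']
      · rfl
  have hQM : ∀ n, ε / 2 < σ (g '' {β : ℕ → ℕ | ∀ k, k < n → β k ≤ M k}) := by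
    intro n
    have hset : {β : ℕ → ℕ | ∀ k, k < n → β k ≤ M k}
        = {β : ℕ → ℕ | ∀ k, k < n → β k ≤ (seq n).1 k} := by
      ext β
      exact ⟨fun h k hk => (hstable n k hk) ▸ h k hk, fun h k hk => (hstable n k hk) ▸ h k hk⟩
    rw [hset]
    exact (seq n).2
  -- the compact set
  set B : Set (ℕ → ℕ) := {β | ∀ k, β k ≤ M k} with hB
  have hBcomp : IsCompact B := by
    have : B = Set.univ.pi (fun k => Set.Iic (M k)) := by
      ext β; simp [hB, Set.mem_pi, Pi.le_def]
    rw [this]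
    exact isCompact_univ_pi fun k => (Set.finite_Iic _).isCompact
  refine ⟨B, hBcomp, ?_⟩
  set K := g '' B with hK
  have hKcomp : IsCompact K := hBcomp.image hg
  have hKcl : IsClosed K := hKcomp.isClosed
  -- every open superset of K contains some g '' B_n
  have hopen : ∀ O : Set α, IsOpen O → K ⊆ O →
      ∃ n, g '' {β : ℕ → ℕ | ∀ k, k < n → β k ≤ M k} ⊆ O := by
    intro O hO hKO
    by_contra hcon
    push_neg at hcon
    have hx : ∀ n, ∃ β : ℕ → ℕ, (∀ k, k < n → β k ≤ M k) ∧ g β ∉ O := by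
      intro n
      obtain ⟨x, hx1, hx2⟩ := not_subset.1 (hcon n)
      obtain ⟨β, hβ, rfl⟩ := hx1
      exact ⟨β, hβ, hx2⟩
    choose β hβ1 hβ2 using hx
    set γ : ℕ → (ℕ → ℕ) := fun n k => min (β n k) (M k) with hγ
    have hγB : ∀ n, γ n ∈ B := fun n k => min_le_right _ _
    obtain ⟨a, haB, θ, hθmono, hθtend⟩ := hBcomp.tendsto_subseq hγB
    have hβtend : Tendsto (fun j => β (θ j)) atTop (𝓝 a) := by
      rw [tendsto_pi_nhds]
      intro k
      have h1 : Tendsto (fun j => γ (θ j) k) atTop (𝓝 (a k)) :=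
        (continuous_apply k).continuousAt.tendsto.comp hθtend
      have h2 : ∀ᶠ j in atTop, β (θ j) k = γ (θ j) k := by
        filter_upwards [eventually_ge_atTop (k+1)] with j hj
        have : k < θ j := lt_of_lt_of_le (Nat.lt_of_lt_of_le (Nat.lt_succ_self k) hj)
          (hθmono.le_apply)
        simp [hγ, min_eq_left (hβ1 (θ j) k this)]
      exact h1.congr' (h2.mono fun j hj => hj.symm)
    have : Tendsto (fun j => g (β (θ j))) atTop (𝓝 (g a)) :=
      (hg.tendsto a).comp hβtend
    have hga : g a ∈ O := hKO ⟨a, haB, rfl⟩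
    have : ∀ᶠ j in atTop, g (β (θ j)) ∈ O := this.eventually (hO.mem_nhds hga)
    obtain ⟨j, hj⟩ := this.exists
    exact hβ2 (θ j) hj
  -- conclude via cthickenings
  have hcth : ∀ j : ℕ, ε / 2 ≤ σ (Metric.cthickening (1/(j+1)) K) := by
    intro j
    have hpos' : (0:ℝ) < 1/(j+1) := by positivity
    obtain ⟨n, hn⟩ := hopen (Metric.thickening (1/(j+1)) K) Metric.isOpen_thickening
      (Metric.self_subset_thickening hpos' K)
    calc ε / 2 ≤ σ (g '' {β : ℕ → ℕ | ∀ k, k < n → β k ≤ M k}) := (hQM n).le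
      _ ≤ σ (Metric.thickening (1/(j+1)) K) := measure_mono hn
      _ ≤ σ (Metric.cthickening (1/(j+1)) K) :=
          measure_mono (Metric.thickening_subset_cthickening _ _)
  have hiInter : ⋂ j : ℕ, Metric.cthickening (1/(j+1)) K = K := by
    apply Subset.antisymm
    · intro x hx
      simp only [mem_iInter] at hx
      have hd : ∀ j : ℕ, EMetric.infEdist x K ≤ ENNReal.ofReal (1/(j+1)) := fun j =>
        Metric.mem_cthickening_iff.mp (hx j)
      have htend0 : Tendsto (fun j : ℕ => ENNReal.ofReal (1/(j+1))) atTop (𝓝 0) := by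
        have := ENNReal.tendsto_ofReal (tendsto_one_div_add_atTop_nhds_zero_nat)
        simpa using this
      have hle0 : EMetric.infEdist x K ≤ 0 := ge_of_tendsto' htend0 hd
      have : x ∈ closure K := EMetric.mem_closure_iff_infEdist_zero.mpr
        (le_antisymm hle0 zero_le)
      rwa [hKcl.closure_eq] at this
    · intro x hx
      exact mem_iInter.2 fun j => Metric.self_subset_cthickening _ hx
  have hanti : Antitone (fun j : ℕ => Metric.cthickening (1/(j+1)) K) := by
    intro i j hij
    apply Metric.cthickening_mono
    apply one_div_le_one_div_of_le (by positivity)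
    exact_mod_cast add_le_add_left (Nat.cast_le.2 hij) 1
  have htend := tendsto_measure_iInter_atTop (μ := σ)
    (fun j => (Metric.isClosed_cthickening).measurableSet.nullMeasurableSet)
    hanti ⟨0, measure_ne_top _ _⟩
  rw [hiInter] at htend
  have : ε / 2 ≤ σ K := ge_of_tendsto' htend hcth
  intro h0
  rw [h0] at this
  exact absurd (le_antisymm this zero_le) (ENNReal.half_pos hpos).ne'
  


lemma BM_refine_step {α β : Type*} [MetricSpace α] [MeasurableSpace α] [BorelSpace α]
    [MetricSpace β] (σ : Measure α) [IsFiniteMeasure σ] {W : Set (α × β)} (hW : IsCompact W)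
    {r : ℝ} (hr : 0 < r) {δ : ENNReal} (hδ : δ ≠ 0) :
    ∃ W' : Set (α × β), W' ⊆ W ∧ IsCompact W' ∧
      σ (Prod.fst '' W \ Prod.fst '' W') ≤ δ ∧
      ∀ z y y', (z, y) ∈ W' → (z, y') ∈ W' → dist y y' ≤ 2 * r := by
  classical
  set C := Prod.snd '' W with hC
  have hCcomp : IsCompact C := hW.image continuous_snd
  have hcover : C ⊆ ⋃ y ∈ C, Metric.ball y r := fun y hy =>
    mem_biUnion hy (Metric.mem_ball_self hr)
  obtain ⟨t, htC, htfin, htcover⟩ :=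
    hCcomp.elim_finite_subcover_image (fun y _ => Metric.isOpen_ball) hcover
  -- index the finite set
  obtain ⟨m, e⟩ :  ∃ m : ℕ, ∃ _ : Fin m ≃ htfin.toFinset, True := by
    exact ⟨htfin.toFinset.card, (htfin.toFinset.equivFin).symm, trivial⟩
  obtain ⟨e, -⟩ := e
  set y : Fin m → β := fun i => ((e i : β)) with hy
  set D : Fin m → Set β := fun i => Metric.closedBall (y i) r with hD
  set Kf : Fin m → Set α := fun i => Prod.fst '' (W ∩ (univ ×ˢ D i)) with hKf
  have hKfcomp : ∀ i, IsCompact (Kf i) :=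
    fun i => (hW.inter_right (isClosed_univ.prod Metric.isClosed_closedBall)).image
      continuous_fst
  set Pp : Fin m → Set α := fun i => Kf i \ ⋃ (j) (_ : j < i), Kf j with hPp
  have hPpmeas : ∀ i, MeasurableSet (Pp i) := fun i =>
    ((hKfcomp i).isClosed.measurableSet).diff
      (MeasurableSet.iUnion fun j => MeasurableSet.iUnion fun _ =>
        (hKfcomp j).isClosed.measurableSet)
  have hQ : ∀ i : Fin m, ∃ Q, Q ⊆ Pp i ∧ IsClosed Q ∧ σ (Pp i \ Q) < δ * 2⁻¹ ^ ((i : ℕ)+1) := by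
    intro i
    apply (hPpmeas i).exists_isClosed_diff_lt (measure_ne_top _ _)
    exact mul_ne_zero hδ (pow_ne_zero _ (by norm_num))
  choose Q hQP hQcl hQσ using hQ
  set W' : Set (α × β) := ⋃ i, W ∩ (Q i ×ˢ D i) with hW'
  have hW'W : W' ⊆ W := iUnion_subset fun i => inter_subset_left
  have hW'comp : IsCompact W' := by
    apply isCompact_iUnion
    exact fun i => hW.inter_right ((hQcl i).prod Metric.isClosed_closedBall)
  -- fst '' W' = ⋃ Q i
  have hQPK : ∀ i, Q i ⊆ Kf i := fun i => (hQP i).trans diff_subset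
  have hfstW' : Prod.fst '' W' = ⋃ i, Q i := by
    apply Subset.antisymm
    · rintro z ⟨p, hp, rfl⟩
      obtain ⟨i, hpW, hpQ⟩ := mem_iUnion.1 hp
      exact mem_iUnion.2 ⟨i, hpQ.1⟩
    · intro z hz
      obtain ⟨i, hzQ⟩ := mem_iUnion.1 hz
      obtain ⟨p, ⟨hpW, -, hpD⟩, rfl⟩ := hQPK i hzQ
      exact ⟨p, mem_iUnion.2 ⟨i, hpW, ⟨hzQ, hpD⟩⟩, rfl⟩
  -- fst '' W = ⋃ Kf i = ⋃ Pp i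
  have hfstW : Prod.fst '' W = ⋃ i, Kf i := by
    apply Subset.antisymm
    · rintro z ⟨p, hp, rfl⟩
      have : p.2 ∈ C := ⟨p, hp, rfl⟩
      obtain ⟨yy, hyt, hyball⟩ := by
        have := htcover this; simpa only [mem_iUnion, exists_prop] using this
      have : p.2 ∈ D (e.symm ⟨yy, htfin.mem_toFinset.2 hyt⟩) := by
        simp only [hD, Metric.mem_closedBall, hy]
        rw [Equiv.apply_symm_apply]
        exact (Metric.mem_ball.1 hyball).le
      exact mem_iUnion.2 ⟨_, ⟨p, ⟨hp, trivial, this⟩, rfl⟩⟩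
    · exact iUnion_subset fun i => image_mono inter_subset_left
  have hKP : ⋃ i, Kf i = ⋃ i, Pp i := by
    apply Subset.antisymm
    · intro z hz
      have hne : {i : Fin m | z ∈ Kf i}.Nonempty := by
        obtain ⟨i, hi⟩ := mem_iUnion.1 hz; exact ⟨i, hi⟩
      obtain ⟨i, hiK, himin⟩ := Set.exists_min_image _ id (Set.toFinite _) hne
      refine mem_iUnion.2 ⟨i, hiK, ?_⟩
      intro hcon
      obtain ⟨j, hj⟩ := mem_iUnion.1 hcon
      obtain ⟨hji, hjK⟩ := by simpa using hj
      exact absurd (himin j hjK) (not_le.2 hji)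
    · exact iUnion_mono fun i => diff_subset
  -- measure of the difference
  have hdiffsub : Prod.fst '' W \ Prod.fst '' W' ⊆ ⋃ i, (Pp i \ Q i) := by
    intro z hz
    obtain ⟨hzW, hzW'⟩ := hz
    rw [hfstW, hKP] at hzW
    obtain ⟨i, hzP⟩ := mem_iUnion.1 hzW
    refine mem_iUnion.2 ⟨i, hzP, fun hzQ => ?_⟩
    exact hzW' (hfstW' ▸ mem_iUnion.2 ⟨i, hzQ⟩)
  have hdiffσ : σ (Prod.fst '' W \ Prod.fst '' W') ≤ δ := by
    calc σ (Prod.fst '' W \ Prod.fst '' W') ≤ σ (⋃ i, (Pp i \ Q i)) := measure_mono hdiffsub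
      _ ≤ ∑ i : Fin m, σ (Pp i \ Q i) := by
          exact measure_iUnion_fintype_le _ _
      _ ≤ ∑ i : Fin m, δ * 2⁻¹ ^ ((i : ℕ)+1) := Finset.sum_le_sum fun i _ => (hQσ i).le
      _ ≤ (Finset.range m).sum (fun k => δ * 2⁻¹ ^ (k+1)) := by
          rw [Finset.sum_range fun k => δ * 2⁻¹ ^ (k+1)]
      _ ≤ δ := BM_geom_sum δ m
  -- disjointness of the Q i, hence section control
  have hPdisj : ∀ i j : Fin m, i ≠ j → ∀ z, z ∈ Pp i → z ∈ Pp j → False := by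
    intro i j hij z hzi hzj
    rcases lt_or_gt_of_ne hij with h | h
    · exact hzj.2 (mem_iUnion.2 ⟨i, mem_iUnion.2 ⟨h, hzi.1⟩⟩)
    · exact hzi.2 (mem_iUnion.2 ⟨j, mem_iUnion.2 ⟨h, hzj.1⟩⟩)
  refine ⟨W', hW'W, hW'comp, hdiffσ, ?_⟩
  intro z yy yy' hy hyp
  obtain ⟨i, hiW, hiQ, hiD⟩ := mem_iUnion.1 hy
  obtain ⟨j, hjW, hjQ, hjD⟩ := mem_iUnion.1 hyp
  have hij : i = j := by
    by_contra hij
    exact hPdisj i j hij z (hQP i hiQ) (hQP j hjQ)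
  subst hij
  calc dist yy yy' ≤ dist yy (y i) + dist (y i) yy' := dist_triangle _ _ _
    _ ≤ r + r := add_le_add (Metric.mem_closedBall.1 hiD)
        (dist_comm (y i) yy' ▸ Metric.mem_closedBall.1 hjD)
    _ = 2 * r := by ring


lemma BM_refine {α β : Type*} [MetricSpace α] [MeasurableSpace α] [BorelSpace α]
    [MetricSpace β] (σ : Measure α) [IsFiniteMeasure σ] {W : Set (α × β)} (hW : IsCompact W)
    (hpos : σ (Prod.fst '' W) ≠ 0) :
    ∃ (K : Set α) (f : α → β), IsCompact K ∧ σ K ≠ 0 ∧ ContinuousOn f K ∧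
      ∀ z ∈ K, (z, f z) ∈ W := by
  classical
  set c := σ (Prod.fst '' W) with hc
  have hctop : c ≠ ⊤ := measure_ne_top _ _
  -- recursive construction
  have step : ∀ (S : Set (α × β)), IsCompact S → ∀ n : ℕ,
      ∃ S' : Set (α × β), S' ⊆ S ∧ IsCompact S' ∧
        σ (Prod.fst '' S \ Prod.fst '' S') ≤ c * 2⁻¹ ^ (n+2) ∧
        ∀ z y y', (z, y) ∈ S' → (z, y') ∈ S' → dist y y' ≤ 2 * (1/2) ^ n := by
    intro S hS n
    exact BM_refine_step σ hS (r := (1/2)^n) (by positivity)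
      (mul_ne_zero hpos (pow_ne_zero _ (by norm_num)))
  let seq : ℕ → {S : Set (α × β) // IsCompact S} := fun n =>
    Nat.rec ⟨W, hW⟩ (fun n p => ⟨(step p.1 p.2 n).choose, (step p.1 p.2 n).choose_spec.2.1⟩) n
  set Wn : ℕ → Set (α × β) := fun n => (seq n).1 with hWn
  have hWn0 : Wn 0 = W := rfl
  have hWncomp : ∀ n, IsCompact (Wn n) := fun n => (seq n).2
  have hWnsucc : ∀ n, Wn (n+1) = (step (Wn n) (hWncomp n) n).choose := fun n => rfl
  have hWnsub : ∀ n, Wn (n+1) ⊆ Wn n := fun n => by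
    rw [hWnsucc n]; exact (step (Wn n) (hWncomp n) n).choose_spec.1
  have hWndiff : ∀ n, σ (Prod.fst '' Wn n \ Prod.fst '' Wn (n+1)) ≤ c * 2⁻¹ ^ (n+2) :=
    fun n => by rw [hWnsucc n]; exact (step (Wn n) (hWncomp n) n).choose_spec.2.2.1
  have hWnsep : ∀ n, ∀ z y y', (z, y) ∈ Wn (n+1) → (z, y') ∈ Wn (n+1) →
      dist y y' ≤ 2 * (1/2) ^ n := fun n => by
    rw [hWnsucc n]; exact (step (Wn n) (hWncomp n) n).choose_spec.2.2.2
  have hWnmono : ∀ {a b : ℕ}, a ≤ b → Wn b ⊆ Wn a := by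
    intro a b hab
    induction hab with
    | refl => exact Subset.rfl
    | step h ih => exact (hWnsub _).trans ih
  -- measure control
  have hmeas : ∀ n, c ≤ σ (Prod.fst '' Wn n) + (Finset.range n).sum (fun k => c * 2⁻¹ ^ (k+2)) := by
    intro n
    induction n with
    | zero => simp [hWn0, hc]
    | succ n ih =>
      refine ih.trans ?_
      have hsub : Prod.fst '' Wn n ⊆ Prod.fst '' Wn (n+1) ∪
          (Prod.fst '' Wn n \ Prod.fst '' Wn (n+1)) := fun z hz => by
        by_cases h : z ∈ Prod.fst '' Wn (n+1)
        · exact Or.inl h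
        · exact Or.inr ⟨hz, h⟩
      have hkey : σ (Prod.fst '' Wn n) ≤ σ (Prod.fst '' Wn (n+1)) + c * 2⁻¹ ^ (n+2) :=
        le_trans ((measure_mono hsub).trans (measure_union_le _ _))
          (add_le_add_right (hWndiff n) _)
      calc σ (Prod.fst '' Wn n) + (Finset.range n).sum (fun k => c * 2⁻¹ ^ (k+2))
          ≤ (σ (Prod.fst '' Wn (n+1)) + c * 2⁻¹ ^ (n+2)) +
            (Finset.range n).sum (fun k => c * 2⁻¹ ^ (k+2)) := add_le_add_left hkey _
        _ = σ (Prod.fst '' Wn (n+1)) + (Finset.range (n+1)).sum (fun k => c * 2⁻¹ ^ (k+2)) := by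
            rw [Finset.sum_range_succ]; ring
  have hsum : ∀ n, (Finset.range n).sum (fun k => c * 2⁻¹ ^ (k+2)) ≤ c * 2⁻¹ := by
    intro n
    have heq : (Finset.range n).sum (fun k => c * 2⁻¹ ^ (k+2))
        = (Finset.range n).sum (fun k => (c * 2⁻¹) * 2⁻¹ ^ (k+1)) :=
      Finset.sum_congr rfl (fun k _ => by ring)
    rw [heq]
    exact BM_geom_sum (c * 2⁻¹) n
  set Fn : ℕ → Set α := fun n => Prod.fst '' Wn n with hFn
  have hFncomp : ∀ n, IsCompact (Fn n) := fun n => (hWncomp n).image continuous_fst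
  set K := ⋂ n, Fn n with hK
  have hKcomp : IsCompact K := (hFncomp 0).of_isClosed_subset
    (isClosed_iInter fun n => (hFncomp n).isClosed) (iInter_subset _ 0)
  have hanti : Antitone Fn := by
    intro a b hab
    exact image_mono (hWnmono hab)
  have htend := tendsto_measure_iInter_atTop (μ := σ)
    (fun n => ((hFncomp n).isClosed.measurableSet).nullMeasurableSet) hanti
    ⟨0, measure_ne_top _ _⟩
  have hcK : c ≤ σ K + c * 2⁻¹ := by
    have h2 : Tendsto (fun n => σ (Fn n) + c * 2⁻¹) atTop (𝓝 (σ (⋂ n, Fn n) + c * 2⁻¹)) :=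
      htend.add tendsto_const_nhds
    exact ge_of_tendsto' h2 (fun n => (hmeas n).trans (add_le_add_right (hsum n) _))
  have hσK : σ K ≠ 0 := by
    intro h0
    rw [h0, zero_add] at hcK
    have : c * 2⁻¹ < c := by
      rw [mul_comm, ← ENNReal.div_eq_inv_mul]
      exact ENNReal.half_lt_self hpos hctop
    exact absurd hcK (not_le.2 this)
  -- sections
  have hsec : ∀ z ∈ K, ∃ y, (z, y) ∈ ⋂ n, Wn n := by
    intro z hz
    set secn : ℕ → Set β := fun n => {y | (z, y) ∈ Wn n} with hsecn
    have hseceq : ∀ n, secn n = Prod.snd '' (Wn n ∩ ({z} ×ˢ univ)) := by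
      intro n
      ext y
      simp only [hsecn, mem_setOf_eq, mem_image, mem_inter_iff, mem_prod, mem_singleton_iff,
        mem_univ, and_true]
      constructor
      · intro h; exact ⟨(z, y), ⟨h, rfl⟩, rfl⟩
      · rintro ⟨⟨z', y'⟩, ⟨hp, rfl⟩, rfl⟩; exact hp
    have hseccomp : ∀ n, IsCompact (secn n) := by
      intro n
      rw [hseceq n]
      exact ((hWncomp n).inter_right ((isClosed_singleton).prod isClosed_univ)).image
        continuous_snd
    have hsecne : ∀ n, (secn n).Nonempty := by
      intro n
      have hzn : z ∈ Fn n := mem_iInter.1 hz n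
      obtain ⟨p, hp, rfl⟩ := hzn
      exact ⟨p.2, by simpa [hsecn] using hp⟩
    have hsecsub : ∀ n, secn (n+1) ⊆ secn n := fun n y hy => hWnsub n hy
    obtain ⟨y, hy⟩ := IsCompact.nonempty_iInter_of_sequence_nonempty_isCompact_isClosed
      secn hsecsub hsecne (hseccomp 0) (fun n => (hseccomp n).isClosed)
    exact ⟨y, mem_iInter.2 fun n => mem_iInter.1 hy n⟩
  have huniq : ∀ z y y', (z, y) ∈ (⋂ n, Wn n) → (z, y') ∈ (⋂ n, Wn n) → y = y' := by
    intro z y y' hy hy'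
    have hb : ∀ n : ℕ, dist y y' ≤ 2 * (1/2 : ℝ)^n := fun n =>
      hWnsep n z y y' (mem_iInter.1 hy (n+1)) (mem_iInter.1 hy' (n+1))
    have htend2 : Tendsto (fun n : ℕ => 2 * (1/2 : ℝ)^n) atTop (𝓝 0) := by
      have := (tendsto_pow_atTop_nhds_zero_of_lt_one (by norm_num : (0:ℝ) ≤ 1/2)
        (by norm_num : (1/2:ℝ) < 1)).const_mul (2:ℝ)
      simpa using this
    have : dist y y' ≤ 0 := ge_of_tendsto' htend2 hb
    exact dist_le_zero.1 this
  have hKne : K.Nonempty := nonempty_of_measure_ne_zero hσK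
  obtain ⟨z₀, hz₀⟩ := hKne
  obtain ⟨y₀, -⟩ := hsec z₀ hz₀
  haveI : Nonempty β := ⟨y₀⟩
  classical
  set f : α → β := fun z =>
    if h : ∃ y, (z, y) ∈ ⋂ n, Wn n then h.choose else Classical.arbitrary β with hf
  have hgraph : ∀ z ∈ K, (z, f z) ∈ ⋂ n, Wn n := by
    intro z hz
    have h := hsec z hz
    rw [hf]
    simp only [dif_pos h]
    exact h.choose_spec
  have hWinfcomp : IsCompact (⋂ n, Wn n) := (hWncomp 0).of_isClosed_subset
    (isClosed_iInter fun n => (hWncomp n).isClosed) (iInter_subset _ 0)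
  have hpre : ∀ C : Set β, IsClosed C →
      f ⁻¹' C ∩ K = (Prod.fst '' ((⋂ n, Wn n) ∩ (univ ×ˢ C))) ∩ K := by
    intro C hC
    apply Subset.antisymm
    · rintro z ⟨hzC, hzK⟩
      exact ⟨⟨(z, f z), ⟨hgraph z hzK, trivial, hzC⟩, rfl⟩, hzK⟩
    · rintro z ⟨⟨p, ⟨hpW, -, hpC⟩, rfl⟩, hzK⟩
      have hpW' : (p.1, p.2) ∈ ⋂ n, Wn n := by rw [Prod.mk.eta]; exact hpW
      have : f p.1 = p.2 := huniq p.1 _ _ (hgraph p.1 hzK) hpW'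
      exact ⟨by rw [mem_preimage, this]; exact hpC, hzK⟩
  have hcont : ContinuousOn f K := by
    rw [continuousOn_iff_continuous_restrict, continuous_iff_isClosed]
    intro C hC
    have heq : K.domRestrict f ⁻¹' C = (Subtype.val : K → α) ⁻¹' (f ⁻¹' C ∩ K) := by
      ext ⟨z, hz⟩
      simp [Set.domRestrict, hz]
    rw [heq, hpre C hC]
    exact (((hWinfcomp.inter_right (isClosed_univ.prod hC)).image
      continuous_fst).isClosed.inter hKcomp.isClosed).preimage continuous_subtype_val
  exact ⟨K, f, hKcomp, hσK, hcont, fun z hz => by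
    have := mem_iInter.1 (hgraph z hz) 0
    rwa [hWn0] at this⟩


lemma BM_kernel (P : Set (Measure Circle)) {σ : Measure Circle} (hσ : σ ∈ P) {K : Set Circle}
    (hK : IsClosed K) (hσK : σ K ≠ 0) :
    ∃ Λ, Λ ⊆ K ∧ IsClosed Λ ∧ PPerfect P Λ ∧ Λ.Nonempty := by
  classical
  set bad : Set (Set Circle) := {V ∈ TopologicalSpace.countableBasis Circle | PSmall P (V ∩ K)}
    with hbad
  have hbadcount : bad.Countable :=
    (TopologicalSpace.countable_countableBasis Circle).mono (sep_subset _ _)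
  set Λ : Set Circle := K \ ⋃₀ bad with hΛ
  have hbadopen : IsOpen (⋃₀ bad) := isOpen_sUnion fun V hV =>
    TopologicalSpace.isOpen_of_mem_countableBasis hV.1
  have hΛcl : IsClosed Λ := hK.sdiff hbadopen
  have hdiff : PSmall P (K \ Λ) := by
    intro σ' hσ'
    have heq : K \ Λ ⊆ ⋃ V ∈ bad, (V ∩ K) := by
      rintro z ⟨hzK, hz⟩
      have : z ∈ ⋃₀ bad := by
        by_contra h
        exact hz ⟨hzK, h⟩
      obtain ⟨V, hV, hzV⟩ := this
      exact mem_biUnion hV ⟨hzV, hzK⟩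
    refine measure_mono_null heq ?_
    exact (measure_biUnion_null_iff hbadcount).2 fun V hV => hV.2 σ' hσ'
  have hσΛ : σ Λ ≠ 0 := by
    intro h0
    apply hσK
    have : K ⊆ Λ ∪ (K \ Λ) := fun z hz => by
      by_cases h : z ∈ Λ
      · exact Or.inl h
      · exact Or.inr ⟨hz, h⟩
    have := (measure_mono (μ := σ) this).trans (measure_union_le _ _)
    rwa [h0, hdiff σ hσ, add_zero, le_zero_iff] at this
  refine ⟨Λ, diff_subset, hΛcl, ?_, nonempty_of_measure_ne_zero hσΛ⟩
  intro V hV ⟨z, hzV, hzΛ⟩ hsmall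
  obtain ⟨V', hV'basis, hzV', hV'V⟩ :=
    (TopologicalSpace.isBasis_countableBasis Circle).exists_subset_of_mem_open hzV hV
  have hV'small : PSmall P (V' ∩ K) := by
    intro σ' hσ'
    have hsub : V' ∩ K ⊆ (V ∩ Λ) ∪ (K \ Λ) := by
      rintro w ⟨hwV', hwK⟩
      by_cases h : w ∈ Λ
      · exact Or.inl ⟨hV'V hwV', h⟩
      · exact Or.inr ⟨hwK, h⟩
    refine measure_mono_null hsub ?_
    refine measure_union_null (hsmall σ' hσ') (hdiff σ' hσ')
  have : V' ∈ bad := ⟨hV'basis, hV'small⟩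
  exact hzΛ.2 ⟨V', this, hzV'⟩

end Auxiliary

/-- **Bayart–Matheron, Proposition 3.6.** For a family `P` of finite positive measures on the
circle which is hereditary with respect to absolute continuity, the `P`-perfect spanning
property of the unimodular eigenvectors (for analytic sets) is equivalent to the existence of
a countable family of continuous eigenvector fields defined on `P`-perfect closed sets whose
ranges have dense linear span. -/
theorem PPerfectlySpanning_iff_continuousEigenvectorFields
    {X : Type*} [AddCommGroup X] [Module ℂ X] [TopologicalSpace X]
    [IsTopologicalAddGroup X] [ContinuousSMul ℂ X] [LocallyConvexSpace ℝ X] [PolishSpace X]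
    (T : X →L[ℂ] X)
    (P : Set (Measure Circle)) (hPfin : ∀ σ ∈ P, IsFiniteMeasure σ)
    (hPher : ∀ σ ∈ P, ∀ σ' : Measure Circle, IsFiniteMeasure σ' → σ' ≪ σ → σ' ∈ P) :
    (∀ D : Set Circle, AnalyticSet D → PSmall P D →
      Dense (↑(Submodule.span ℂ
        (⋃ z : Circle, ⋃ (_ : z ∉ D), {x : X | T x = (z : ℂ) • x})) : Set X)) ↔
    (∃ (Λ : ℕ → Set Circle) (E : ℕ → Circle → X),
      (∀ i, IsClosed (Λ i)) ∧ (∀ i, PPerfect P (Λ i)) ∧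
      (∀ i, ContinuousOn (E i) (Λ i)) ∧
      (∀ i, ∀ z ∈ Λ i, T (E i z) = (z : ℂ) • E i z) ∧
      Dense (↑(Submodule.span ℂ (⋃ i, E i '' Λ i)) : Set X)) := by
  classical
  constructor
  · -- hard direction: (i) → (ii)
    intro H
    letI := TopologicalSpace.upgradeIsCompletelyMetrizable X
    obtain ⟨u, hu⟩ := ((TopologicalSpace.countable_countableBasis X).insert ∅).exists_eq_range
      (insert_nonempty _ _)
    have huopen : ∀ n, IsOpen (u n) := by
      intro n
      have : u n ∈ insert ∅ (TopologicalSpace.countableBasis X) := hu ▸ mem_range_self n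
      rcases mem_insert_iff.1 this with h | h
      · rw [h]; exact isOpen_empty
      · exact TopologicalSpace.isOpen_of_mem_countableBasis h
    have hubasis : ∀ (x : X) (W : Set X), IsOpen W → x ∈ W → ∃ n, x ∈ u n ∧ u n ⊆ W := by
      intro x W hW hx
      obtain ⟨V, hVb, hxV, hVW⟩ :=
        (TopologicalSpace.isBasis_countableBasis X).exists_subset_of_mem_open hx hW
      have : V ∈ insert ∅ (TopologicalSpace.countableBasis X) := mem_insert_of_mem _ hVb
      rw [hu] at this
      obtain ⟨n, rfl⟩ := this
      exact ⟨n, hxV, hVW⟩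
    set Z : Set (Circle × X) := {p | T p.2 = (p.1 : ℂ) • p.2} with hZ
    have hccoe : Continuous (fun z : Circle => (z : ℂ)) := continuous_subtype_val
    have hZcl : IsClosed Z := isClosed_eq (T.continuous.comp continuous_snd)
      ((hccoe.comp continuous_fst).smul continuous_snd)
    haveI : PolishSpace Z := hZcl.polishSpace
    set SS : Set X → Set (Circle × X) :=
      fun U => {p | T p.2 = (p.1 : ℂ) • p.2 ∧ p.2 ∈ U} with hSS
    set A : Set X → Set Circle := fun U => Prod.fst '' SS U with hA
    have hAanal : ∀ U : Set X, IsOpen U → AnalyticSet (A U) := by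
      intro U hU
      set s : Set Z := {q : Z | (q : Circle × X).2 ∈ U} with hs
      have hsopen : IsOpen s := hU.preimage (continuous_snd.comp continuous_subtype_val)
      have himg : (Subtype.val '' s) = SS U := by
        ext p
        constructor
        · rintro ⟨⟨q, hq⟩, hqs, rfl⟩
          exact ⟨hq, hqs⟩
        · rintro ⟨h1, h2⟩
          exact ⟨⟨p, h1⟩, h2, rfl⟩
      have : AnalyticSet (SS U) := himg ▸ hsopen.analyticSet_image continuous_subtype_val
      exact this.image_of_continuous continuous_fst
    set D : Set Circle := ⋃ n, if PSmall P (A (u n)) then A (u n) else ∅ with hD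
    have hDanal : AnalyticSet D := by
      refine AnalyticSet.iUnion fun n => ?_
      by_cases h : PSmall P (A (u n))
      · rw [if_pos h]; exact hAanal _ (huopen n)
      · rw [if_neg h]; exact analyticSet_empty
    have hDsmall : PSmall P D := by
      intro σ hσ
      refine measure_iUnion_null fun n => ?_
      by_cases h : PSmall P (A (u n))
      · rw [if_pos h]; exact h σ hσ
      · rw [if_neg h]; exact measure_empty
    have hdense := H D hDanal hDsmall
    have hkey : ∀ n : ℕ, ∃ (Λ : Set Circle) (E : Circle → X), IsClosed Λ ∧ PPerfect P Λ ∧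
        ContinuousOn E Λ ∧ (∀ w ∈ Λ, T (E w) = (w : ℂ) • E w) ∧
        ((∃ z : Circle, ∃ x : X, T x = (z : ℂ) • x ∧ x ∈ u n ∧ z ∉ D) →
          ∃ w ∈ Λ, E w ∈ u n) := by
      intro n
      by_cases hex : ∃ z : Circle, ∃ x : X, T x = (z : ℂ) • x ∧ x ∈ u n ∧ z ∉ D
      case neg =>
        refine ⟨∅, fun _ => 0, isClosed_empty, ?_, continuousOn_empty _,
          fun w hw => absurd hw (notMem_empty w), fun h => absurd h hex⟩
        intro V hV h
        exact absurd h (by simp)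
      case pos =>
        obtain ⟨z, x, hzx, hxU, hzD⟩ := hex
        have hAns : ¬ PSmall P (A (u n)) := by
          intro hsmall
          apply hzD
          refine mem_iUnion.2 ⟨n, ?_⟩
          rw [if_pos hsmall]
          exact ⟨(z, x), ⟨hzx, hxU⟩, rfl⟩
        rw [PSmall] at hAns
        push_neg at hAns
        obtain ⟨σ, hσP, hσA⟩ := hAns
        haveI : IsFiniteMeasure σ := hPfin σ hσP
        set s : Set Z := {q : Z | (q : Circle × X).2 ∈ u n} with hs
        haveI : PolishSpace s :=
          IsOpen.polishSpace ((huopen n).preimage (continuous_snd.comp continuous_subtype_val))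
        haveI : Nonempty s := ⟨⟨⟨(z, x), hzx⟩, hxU⟩⟩
        obtain ⟨ψ, hψc, hψs⟩ := PolishSpace.exists_nat_nat_continuous_surjective ↥s
        set φ : (ℕ → ℕ) → Circle × X := fun β => ((ψ β : Z) : Circle × X) with hφ
        have hφc : Continuous φ := continuous_subtype_val.comp
          (continuous_subtype_val.comp hψc)
        have hφrange : range φ = SS (u n) := by
          ext p
          constructor
          · rintro ⟨β, rfl⟩
            exact ⟨((ψ β : Z)).2, (ψ β).2⟩
          · rintro ⟨h1, h2⟩
            obtain ⟨q, hq⟩ := hψs ⟨⟨p, h1⟩, h2⟩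
            refine ⟨q, ?_⟩
            show ((ψ q : Z) : Circle × X) = p
            rw [hq]
        set g : (ℕ → ℕ) → Circle := fun β => (φ β).1 with hg
        have hgrange : range g = A (u n) := by
          show range g = Prod.fst '' SS (u n)
          rw [← hφrange]
          exact Set.range_comp Prod.fst φ
        obtain ⟨B, hBcomp, hBσ⟩ := BM_cap σ g (continuous_fst.comp hφc)
          (by rw [hgrange]; exact hσA)
        set W := φ '' B with hW
        have hWcomp : IsCompact W := hBcomp.image hφc
        have hfstW : Prod.fst '' W = g '' B := by
          rw [hW, Set.image_image]
        obtain ⟨K, f, hKcomp, hKσ, hfc, hfgraph⟩ := BM_refine σ hWcomp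
          (by rw [hfstW]; exact hBσ)
        have hWS : W ⊆ SS (u n) := by
          rw [hW, ← hφrange]
          exact image_subset_range φ B
        obtain ⟨Λ, hΛK, hΛcl, hΛperf, hΛne⟩ := BM_kernel P hσP hKcomp.isClosed hKσ
        refine ⟨Λ, f, hΛcl, hΛperf, hfc.mono hΛK, ?_, ?_⟩
        · intro w hw
          exact (hWS (hfgraph w (hΛK hw))).1
        · intro _
          obtain ⟨w, hw⟩ := hΛne
          exact ⟨w, hw, (hWS (hfgraph w (hΛK hw))).2⟩
    choose Λf Ef h1 h2 h3 h4 h5 using hkey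
    refine ⟨Λf, Ef, h1, h2, h3, h4, ?_⟩
    set N := (Submodule.span ℂ (⋃ i, Ef i '' Λf i)).topologicalClosure with hN
    have hNclosed : IsClosed (N : Set X) := by
      rw [hN]; exact Submodule.isClosed_topologicalClosure _
    have hS₀N : (⋃ z : Circle, ⋃ (_ : z ∉ D), {x : X | T x = (z : ℂ) • x}) ⊆ (N : Set X) := by
      intro x hx
      simp only [mem_iUnion] at hx
      obtain ⟨z, hzD, hzx⟩ := hx
      rw [← hNclosed.closure_eq]
      rw [mem_closure_iff]
      intro V hV hxV
      obtain ⟨m, hxm, hmV⟩ := hubasis x V hV hxV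
      obtain ⟨w, hwΛ, hwu⟩ := h5 m ⟨z, x, hzx, hxm, hzD⟩
      refine ⟨Ef m w, hmV hwu, ?_⟩
      apply Submodule.le_topologicalClosure
      exact Submodule.subset_span (mem_iUnion.2 ⟨m, mem_image_of_mem _ hwΛ⟩)
    have hNuniv : (N : Set X) = univ := by
      apply eq_univ_of_forall
      intro x
      have hspan : Submodule.span ℂ
          (⋃ z : Circle, ⋃ (_ : z ∉ D), {x : X | T x = (z : ℂ) • x}) ≤ N :=
        Submodule.span_le.2 hS₀N
      have hsub : closure (↑(Submodule.span ℂ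
          (⋃ z : Circle, ⋃ (_ : z ∉ D), {x : X | T x = (z : ℂ) • x})) : Set X) ⊆ (N : Set X) :=
        closure_minimal hspan hNclosed
      rw [hdense.closure_eq] at hsub
      exact hsub trivial
    rw [dense_iff_closure_eq, ← Submodule.topologicalClosure_coe]
    exact hNuniv
  · -- easy direction: (ii) → (i)
    rintro ⟨Λ, E, hcl, hperf, hcont, heig, hdense⟩ D hDanal hDsmall
    set N := (Submodule.span ℂ
      (⋃ z : Circle, ⋃ (_ : z ∉ D), {x : X | T x = (z : ℂ) • x})).topologicalClosure with hN
    have hNclosed : IsClosed (N : Set X) := by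
      rw [hN]; exact Submodule.isClosed_topologicalClosure _
    have himg : ∀ i, ∀ z ∈ Λ i, E i z ∈ (N : Set X) := by
      intro i z hz
      have hzcl : z ∈ closure (Λ i \ D) := by
        rw [mem_closure_iff]
        intro V hV hzV
        have hne : (V ∩ Λ i).Nonempty := ⟨z, hzV, hz⟩
        have hns := hperf i V hV hne
        rw [PSmall] at hns
        push_neg at hns
        obtain ⟨σ, hσP, hσ⟩ := hns
        have hnsub : ¬ (V ∩ Λ i ⊆ D) := fun hsub =>
          hσ (measure_mono_null hsub (hDsmall σ hσP))
        obtain ⟨w, hw1, hw2⟩ := not_subset.1 hnsub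
        exact ⟨w, hw1.1, hw1.2, hw2⟩
      have hcw : ContinuousWithinAt (E i) (Λ i \ D) z := ((hcont i) z hz).mono diff_subset
      have hmem := hcw.mem_closure_image hzcl
      have hsub : E i '' (Λ i \ D) ⊆ (N : Set X) := by
        rintro - ⟨w, ⟨hwΛ, hwD⟩, rfl⟩
        apply Submodule.le_topologicalClosure
        apply Submodule.subset_span
        exact mem_iUnion.2 ⟨w, mem_iUnion.2 ⟨hwD, heig i w hwΛ⟩⟩
      exact closure_minimal hsub hNclosed hmem
    have hspan : Submodule.span ℂ (⋃ i, E i '' Λ i) ≤ N := by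
      apply Submodule.span_le.2
      intro y hy
      obtain ⟨i, hy⟩ := mem_iUnion.1 hy
      obtain ⟨w, hw, rfl⟩ := hy
      exact himg i w hw
    have hNuniv : (N : Set X) = univ := by
      apply eq_univ_of_forall
      intro x
      have hsub : closure (↑(Submodule.span ℂ (⋃ i, E i '' Λ i)) : Set X) ⊆ (N : Set X) :=
        closure_minimal hspan hNclosed
      rw [hdense.closure_eq] at hsub
      exact hsub trivial
    rw [dense_iff_closure_eq, ← Submodule.topologicalClosure_coe]
    exact hNuniv
end

section
/- Let X be a complex Banach space and let G = ∏_{i∈ℕ} ℤ/2ℤ be the Cantor group, with Haar probability measure m_G and ultrametric d. Suppose E : G → X is α-Hölderian for some α > 1 with constant C, i.e. ‖E(ω) − E(ω')‖ ≤ C·d(ω,ω')^α for all ω, ω' ∈ G. Then E has an absolutely convergent Fourier series: ∑_{I ∈ FIN} ‖Ê(γ_I)‖ < ∞, where the sum ranges over all finite subsets I of ℕ (i.e. the family (Ê(γ_I))_I is summable in norm). -/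
set_option maxHeartbeats 1000000


open MeasureTheory Filter Topology

/-- The value of a character of `ℤ/2ℤ`: `(-1)^v`. -/
noncomputable def cantorCharVal (v : ZMod 2) : ℂ := if v = 0 then 1 else -1

/-- The character `γ_I` of the Cantor group `G = ∏_{i∈ℕ} ℤ/2ℤ` associated with a finite set
`I ⊆ ℕ`: `γ_I(ω) = ∏_{i∈I} (-1)^{ω_i}`. -/
noncomputable def cantorChar (I : Finset ℕ) (ω : ℕ → ZMod 2) : ℂ :=
  ∏ i ∈ I, cantorCharVal (ω i)

lemma cantorCharVal_norm (v : ZMod 2) : ‖cantorCharVal v‖ = 1 := by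
  fin_cases v <;> simp [cantorCharVal] <;> split_ifs <;> simp_all

lemma cantorCharVal_add_one (v : ZMod 2) : cantorCharVal (1 + v) = -cantorCharVal v := by
  have hv : ∀ w : ZMod 2, w = 0 ∨ w = 1 := by decide
  rcases hv v with rfl | rfl <;>
    simp [cantorCharVal, show ((1 : ZMod 2) + 1) = 0 from rfl, show (1 : ZMod 2) ≠ 0 by decide]

lemma cantorChar_norm (I : Finset ℕ) (ω : ℕ → ZMod 2) : ‖cantorChar I ω‖ = 1 := by
  rw [cantorChar, norm_prod]
  exact Finset.prod_eq_one fun i _ => cantorCharVal_norm (ω i)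

lemma cantorChar_continuous (I : Finset ℕ) : Continuous (cantorChar I) := by
  unfold cantorChar
  exact continuous_finset_prod _ fun i _ =>
    (continuous_of_discreteTopology (f := cantorCharVal)).comp (continuous_apply i)

lemma sum_range_two_pow (n : ℕ) : ∑ j ∈ Finset.range n, 2 ^ j = 2 ^ n - 1 := by
  induction n with
  | zero => simp
  | succ k ih =>
    rw [Finset.sum_range_succ, ih, pow_succ]
    have h1 : 1 ≤ 2 ^ k := Nat.one_le_two_pow
    omega

/-- **Bayart–Matheron, Lemma 4.1.** A super-Lipschitz (`α`-Hölderian with `α > 1`) map from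
the Cantor group into a Banach space has an absolutely convergent Fourier series. Here `m` is
the Haar probability measure of the Cantor group (characterized as a translation-invariant
probability measure), and the Hölder condition is expressed through the ultrametric
`d(ω,ω') = 2^{-n(ω,ω')}`: if `ω` and `ω'` agree on the first `n` coordinates, then
`‖E ω - E ω'‖ ≤ C·2^{-αn}`. -/
theorem cantor_superLipschitz_absolutely_convergent_fourier
    {X : Type*} [NormedAddCommGroup X] [NormedSpace ℂ X]
    (m : Measure (ℕ → ZMod 2)) (hprob : IsProbabilityMeasure m)
    (hinv : ∀ g : ℕ → ZMod 2, m.map (fun ω => g + ω) = m)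
    (E : (ℕ → ZMod 2) → X) (α C : ℝ) (hα : 1 < α)
    (hHolder : ∀ (n : ℕ) (ω ω' : ℕ → ZMod 2), (∀ i < n, ω i = ω' i) →
      ‖E ω - E ω'‖ ≤ C * (2 : ℝ) ^ (-(α * n))) :
    Summable (fun I : Finset ℕ => ‖∫ ω, cantorChar I ω • E ω ∂m‖) := by
  haveI := hprob
  have hC : 0 ≤ C := by
    have h := hHolder 0 0 0 (fun i hi => rfl)
    simpa using h
  -- continuity of E
  have hEcont : Continuous E := by
    rw [continuous_iff_continuousAt]
    intro ω
    rw [ContinuousAt, Metric.tendsto_nhds]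
    intro ε hε
    have hr0 : (0:ℝ) < (2:ℝ) ^ (-α) := Real.rpow_pos_of_pos two_pos _
    have hr1 : (2:ℝ) ^ (-α) < 1 :=
      Real.rpow_lt_one_of_one_lt_of_neg one_lt_two (by linarith)
    have hlim : Tendsto (fun n : ℕ => C * ((2:ℝ) ^ (-α)) ^ n) atTop (𝓝 0) := by
      simpa using (tendsto_pow_atTop_nhds_zero_of_lt_one hr0.le hr1).const_mul C
    obtain ⟨n, hn⟩ := (hlim.eventually (gt_mem_nhds hε)).exists
    have hev : ∀ᶠ ω' in 𝓝 ω, ∀ i ∈ Finset.range n, ω' i = ω i := by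
      rw [eventually_all_finset]
      intro i _
      have hmem : ∀ᶠ x in 𝓝 (ω i), x = ω i := by
        rw [nhds_discrete]; exact eventually_pure.2 rfl
      exact ((continuous_apply i).tendsto ω).eventually hmem
    filter_upwards [hev] with ω' hω'
    have hb := hHolder n ω' ω (fun i hi => hω' i (Finset.mem_range.2 hi))
    rw [dist_eq_norm]
    calc ‖E ω' - E ω‖ ≤ C * (2:ℝ) ^ (-(α * n)) := hb
      _ = C * ((2:ℝ) ^ (-α)) ^ n := by
          rw [← Real.rpow_natCast ((2:ℝ) ^ (-α)) n, ← Real.rpow_mul (by norm_num)]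
          ring_nf
      _ < ε := hn
  -- integrability
  have hEbound : ∀ ω, ‖E ω‖ ≤ ‖E 0‖ + C := by
    intro ω
    have h := hHolder 0 ω 0 (fun i hi => absurd hi (Nat.not_lt_zero i))
    simp only [Nat.cast_zero, mul_zero, neg_zero, Real.rpow_zero, mul_one] at h
    calc ‖E ω‖ = ‖E ω - E 0 + E 0‖ := by rw [sub_add_cancel]
      _ ≤ ‖E ω - E 0‖ + ‖E 0‖ := norm_add_le _ _
      _ ≤ C + ‖E 0‖ := by linarith
      _ = ‖E 0‖ + C := by ring
  have hint : ∀ (I : Finset ℕ) (F : (ℕ → ZMod 2) → X), Continuous F → (∀ ω, ‖F ω‖ ≤ ‖E 0‖ + C) →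
      Integrable (fun ω => cantorChar I ω • F ω) m := by
    intro I F hF hFb
    refine ⟨((cantorChar_continuous I).smul hF).aestronglyMeasurable,
      HasFiniteIntegral.of_bounded (C := ‖E 0‖ + C) (Eventually.of_forall fun ω => ?_)⟩
    rw [norm_smul, cantorChar_norm, one_mul]
    exact hFb ω
  -- the key bound for nonempty I
  have key : ∀ (I : Finset ℕ) (hI : I.Nonempty),
      ‖∫ ω, cantorChar I ω • E ω ∂m‖ ≤ (C/2) * (2:ℝ) ^ (-(α * (I.max' hI : ℕ))) := by
    intro I hI
    set i := I.max' hI with hidef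
    set g : ℕ → ZMod 2 := fun j => if j = i then 1 else 0 with hg
    have hgcont : Continuous (fun ω : ℕ → ZMod 2 => g + ω) := by continuity
    have hgm : Measurable (fun ω : ℕ → ZMod 2 => g + ω) := by measurability
    have hflip : ∀ ω, cantorChar I (g + ω) = - cantorChar I ω := by
      intro ω
      rw [cantorChar, cantorChar,
        ← Finset.mul_prod_erase I _ (I.max'_mem hI),
        ← Finset.mul_prod_erase I (fun j => cantorCharVal (ω j)) (I.max'_mem hI)]
      have h1 : (g + ω) i = 1 + ω i := by simp [hg]
      have h2 : ∀ j ∈ I.erase i, cantorCharVal ((g + ω) j) = cantorCharVal (ω j) := by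
        intro j hj
        have hne := Finset.ne_of_mem_erase hj
        simp [hg, hne]
      rw [Finset.prod_congr rfl h2, h1, cantorCharVal_add_one]
      ring
    have hchange : ∫ ω, cantorChar I ω • E ω ∂m
        = ∫ ω, cantorChar I (g + ω) • E (g + ω) ∂m := by
      conv_lhs => rw [← hinv g]
      rw [integral_map (f := fun ω => cantorChar I ω • E ω) hgm.aemeasurable
        ((cantorChar_continuous I).smul hEcont).stronglyMeasurable.aestronglyMeasurable]
    have heq2 : ∫ ω, cantorChar I ω • E ω ∂m = - ∫ ω, cantorChar I ω • E (g + ω) ∂m := by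
      rw [hchange, ← integral_neg]
      congr 1
      ext ω
      rw [hflip, neg_smul]
    have hEgb : ∀ ω, ‖E (g + ω)‖ ≤ ‖E 0‖ + C := fun ω => hEbound _
    have hint1 := hint I E hEcont hEbound
    have hint2 := hint I (fun ω => E (g + ω)) (hEcont.comp hgcont) hEgb
    have hAB : ∫ ω, cantorChar I ω • (E ω - E (g + ω)) ∂m
        = (2:ℂ) • ∫ ω, cantorChar I ω • E ω ∂m := by
      have hsplit : (fun ω => cantorChar I ω • (E ω - E (g + ω)))
          = fun ω => cantorChar I ω • E ω - cantorChar I ω • E (g + ω) := by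
        ext ω; rw [smul_sub]
      rw [hsplit, integral_sub hint1 hint2]
      rw [show ∫ ω, cantorChar I ω • E (g + ω) ∂m = - ∫ ω, cantorChar I ω • E ω ∂m by
        rw [heq2, neg_neg], two_smul]
      abel
    have hnorm : ‖∫ ω, cantorChar I ω • (E ω - E (g + ω)) ∂m‖ ≤ C * (2:ℝ) ^ (-(α * i)) := by
      have hb : ∀ ω, ‖cantorChar I ω • (E ω - E (g + ω))‖ ≤ C * (2:ℝ) ^ (-(α * i)) := by
        intro ω
        rw [norm_smul, cantorChar_norm, one_mul]
        refine hHolder i ω (g + ω) fun j hj => ?_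
        have hne : j ≠ i := Nat.ne_of_lt hj
        simp [hg, hne]
      calc ‖∫ ω, cantorChar I ω • (E ω - E (g + ω)) ∂m‖
          ≤ (C * (2:ℝ) ^ (-(α * i))) * (m Set.univ).toReal :=
            norm_integral_le_of_norm_le_const (Eventually.of_forall hb)
        _ = C * (2:ℝ) ^ (-(α * i)) := by simp
    have h2A : (2:ℝ) * ‖∫ ω, cantorChar I ω • E ω ∂m‖ ≤ C * (2:ℝ) ^ (-(α * i)) := by
      calc (2:ℝ) * ‖∫ ω, cantorChar I ω • E ω ∂m‖
          = ‖(2:ℂ) • ∫ ω, cantorChar I ω • E ω ∂m‖ := by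
            rw [norm_smul]; norm_num
        _ = ‖∫ ω, cantorChar I ω • (E ω - E (g + ω)) ∂m‖ := by rw [hAB]
        _ ≤ C * (2:ℝ) ^ (-(α * i)) := hnorm
    linarith
  -- summability via the bit-indices encoding
  set f : Finset ℕ → ℝ := fun I => ‖∫ ω, cantorChar I ω • E ω ∂m‖ with hf
  set K : ℝ := (C/2) * (2:ℝ) ^ α with hK
  have hKpos : 0 ≤ K := mul_nonneg (by linarith) (Real.rpow_pos_of_pos two_pos α).le
  set g0 : ℕ → ℝ := fun n => (if n = 0 then f ∅ else 0) + K * (n:ℝ) ^ (-α) with hg0def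
  have hg0 : Summable g0 := by
    apply Summable.add
    · apply summable_of_ne_finset_zero (s := ({0} : Finset ℕ))
      intro n hn
      simp only [Finset.mem_singleton] at hn
      simp [hn]
    · exact (Real.summable_nat_rpow.2 (by linarith)).mul_left K
  have hinj : Function.Injective (fun I : Finset ℕ => ∑ i ∈ I, 2 ^ i) :=
    Finset.geomSum_injective le_rfl
  have hcomp : Summable (fun I : Finset ℕ => g0 (∑ i ∈ I, 2 ^ i)) := hg0.comp_injective hinj
  refine Summable.of_nonneg_of_le (fun I => norm_nonneg _) (fun I => ?_) hcomp
  rcases I.eq_empty_or_nonempty with rfl | hI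
  · simp only [Finset.sum_empty, hg0def, if_pos rfl]
    rw [Nat.cast_zero, Real.zero_rpow (by linarith : -α ≠ 0)]
    simp [hf]
  · set i := I.max' hI with hidef
    set N : ℕ := ∑ j ∈ I, 2 ^ j with hN
    have hNlb : 2 ^ i ≤ N :=
      Finset.single_le_sum (f := fun j => 2 ^ j) (fun j _ => Nat.zero_le _) (I.max'_mem hI)
    have hNpos : N ≠ 0 := by positivity
    have hNub : N ≤ 2 ^ (i + 1) := by
      have hsub : I ⊆ Finset.range (i + 1) := fun j hj =>
        Finset.mem_range.2 (Nat.lt_succ_of_le (I.le_max' j hj))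
      calc N ≤ ∑ j ∈ Finset.range (i + 1), 2 ^ j := Finset.sum_le_sum_of_subset hsub
        _ = 2 ^ (i + 1) - 1 := sum_range_two_pow _
        _ ≤ 2 ^ (i + 1) := Nat.sub_le _ _
    have hstep : (C/2) * (2:ℝ) ^ (-(α * i)) ≤ K * (N:ℝ) ^ (-α) := by
      have h1 : ((2:ℝ) ^ ((i:ℕ) + 1 : ℕ)) ^ (-α) ≤ (N:ℝ) ^ (-α) := by
        apply Real.rpow_le_rpow_of_nonpos
        · positivity
        · exact_mod_cast hNub
        · linarith
      have h2 : (2:ℝ) ^ α * ((2:ℝ) ^ ((i:ℕ) + 1 : ℕ)) ^ (-α) = (2:ℝ) ^ (-(α * i)) := by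
        rw [← Real.rpow_natCast (2:ℝ) (i + 1), ← Real.rpow_mul (by norm_num),
          ← Real.rpow_add two_pos]
        push_cast
        ring_nf
      calc (C/2) * (2:ℝ) ^ (-(α * i))
          = (C/2) * ((2:ℝ) ^ α * ((2:ℝ) ^ ((i:ℕ) + 1 : ℕ)) ^ (-α)) := by rw [h2]
        _ ≤ (C/2) * ((2:ℝ) ^ α * (N:ℝ) ^ (-α)) := by
            apply mul_le_mul_of_nonneg_left _ (by linarith)
            exact mul_le_mul_of_nonneg_left h1 (Real.rpow_pos_of_pos two_pos α).le
        _ = K * (N:ℝ) ^ (-α) := by rw [hK]; ring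
    calc f I ≤ (C/2) * (2:ℝ) ^ (-(α * i)) := key I hI
      _ ≤ K * (N:ℝ) ^ (-α) := hstep
      _ ≤ g0 N := by
          simp only [hg0def, if_neg hNpos, zero_add, le_refl]
end

section
/- Let X be a complex Banach space and let G = ∏_{i∈ℕ} ℤ/2ℤ be the Cantor group, with Haar probability measure m_G and ultrametric d. Suppose E : G → X is α-Hölderian for some α > 1 with constant C, i.e. ‖E(ω) − E(ω')‖ ≤ C·d(ω,ω')^α for all ω, ω' ∈ G. Then for every n ∈ ℕ and every finite set I ⊆ ℕ with n ∈ I, the Fourier coefficient satisfies ‖Ê(γ_I)‖ ≤ (C/2)·2^{−αn}. -/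
open MeasureTheory Filter Topology

lemma cantorCharVal_flip (v : ZMod 2) : cantorCharVal (1 + v) = - cantorCharVal v := by
  fin_cases v <;> simp [cantorCharVal, show (1+1:ZMod 2)=0 from rfl] <;> split_ifs <;> simp_all <;> exact absurd rfl ‹_›

/-- **Bayart–Matheron, Fact in Lemma 4.1.** If `E` is `α`-Hölderian with `α > 1` and constant
`C` on the Cantor group (with respect to the ultrametric `d(ω,ω') = 2^{-n(ω,ω')}`, the Hölder
condition being expressed by: if `ω` and `ω'` agree on the first `n` coordinates then
`‖E ω - E ω'‖ ≤ C·2^{-αn}`), then the Fourier coefficient of `E` at any character `γ_I` with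
`n ∈ I` satisfies `‖Ê(γ_I)‖ ≤ (C/2)·2^{-αn}`. Here `m` is the Haar probability measure of the
Cantor group, characterized as a translation-invariant probability measure. -/
theorem cantor_superLipschitz_fourier_coefficient_bound
    {X : Type*} [NormedAddCommGroup X] [NormedSpace ℂ X]
    (m : Measure (ℕ → ZMod 2)) (hprob : IsProbabilityMeasure m)
    (hinv : ∀ g : ℕ → ZMod 2, m.map (fun ω => g + ω) = m)
    (E : (ℕ → ZMod 2) → X) (α C : ℝ) (hα : 1 < α)
    (hHolder : ∀ (n : ℕ) (ω ω' : ℕ → ZMod 2), (∀ i < n, ω i = ω' i) →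
      ‖E ω - E ω'‖ ≤ C * (2 : ℝ) ^ (-(α * n))) :
    ∀ (n : ℕ) (I : Finset ℕ), n ∈ I →
      ‖∫ ω, cantorChar I ω • E ω ∂m‖ ≤ (C / 2) * (2 : ℝ) ^ (-(α * n)) := by
  intro n I hnI
  have hC : 0 ≤ C := by
    have := hHolder 0 0 0 (by simp)
    simpa using this
  -- C * 2^{-αN} → 0
  have hbpow : ∀ N : ℕ, (2:ℝ) ^ (-(α * (N:ℝ))) = ((2:ℝ) ^ (-α)) ^ N := by
    intro N
    rw [← Real.rpow_natCast ((2:ℝ) ^ (-α)) N, ← Real.rpow_mul (by norm_num)]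
    ring_nf
  have hblt : (2:ℝ) ^ (-α) < 1 :=
    Real.rpow_lt_one_of_one_lt_of_neg (by norm_num) (by linarith)
  have hbnn : (0:ℝ) ≤ (2:ℝ) ^ (-α) := Real.rpow_nonneg (by norm_num) _
  have hlim : Tendsto (fun N : ℕ => C * (2:ℝ) ^ (-(α * (N:ℝ)))) atTop (𝓝 0) := by
    simp only [hbpow]
    simpa using (tendsto_pow_atTop_nhds_zero_of_lt_one hbnn hblt).const_mul C
  -- E is continuous
  have hEcont : Continuous E := by
    rw [continuous_iff_continuousAt]
    intro ω
    rw [ContinuousAt, tendsto_iff_norm_sub_tendsto_zero,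
      NormedAddCommGroup.tendsto_nhds_zero]
    intro ε hε
    obtain ⟨N, hN⟩ := (hlim.eventually (gt_mem_nhds hε)).exists
    have hmem : Set.pi {i : ℕ | i < N} (fun i => {ω i}) ∈ 𝓝 ω := by
      apply set_pi_mem_nhds (Set.finite_Iio N)
      intro i _
      simp [nhds_discrete]
    filter_upwards [hmem] with ω' hω'
    have hbd : ‖E ω' - E ω‖ ≤ C * (2:ℝ) ^ (-(α * (N:ℝ))) :=
      hHolder N ω' ω fun i hi => hω' i hi
    simpa using lt_of_le_of_lt hbd hN
  -- boundedness of E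
  have hEbd : ∀ ω, ‖E ω‖ ≤ ‖E 0‖ + C := by
    intro ω
    have h := hHolder 0 ω 0 (by simp)
    simp only [Nat.cast_zero, mul_zero, neg_zero, Real.rpow_zero, mul_one] at h
    calc ‖E ω‖ = ‖E 0 + (E ω - E 0)‖ := by rw [add_sub_cancel]
    _ ≤ ‖E 0‖ + ‖E ω - E 0‖ := norm_add_le _ _
    _ ≤ ‖E 0‖ + C := by linarith
  set g : ℕ → ZMod 2 := fun i => if i = n then 1 else 0 with hg
  have hgn : g n = 1 := if_pos rfl
  have hgne : ∀ i ≠ n, g i = 0 := fun i hi => if_neg hi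
  -- character flip
  have hflip : ∀ ω, cantorChar I (g + ω) = - cantorChar I ω := by
    intro ω
    unfold cantorChar
    rw [← Finset.insert_erase hnI, Finset.prod_insert (Finset.notMem_erase _ _),
      Finset.prod_insert (Finset.notMem_erase _ _)]
    simp only [Pi.add_apply]
    rw [hgn, cantorCharVal_flip]
    rw [Finset.prod_congr rfl (fun i hi => by
      rw [hgne i (Finset.ne_of_mem_erase hi), zero_add])]
    ring
  -- translation map continuity / measurability
  have hTcont : Continuous (fun ω : ℕ → ZMod 2 => g + ω) :=
    continuous_const.add continuous_id
  -- integrability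
  have hint1 : Integrable (fun ω => cantorChar I ω • E ω) m := by
    refine ⟨(((cantorChar_continuous I).smul hEcont)).aestronglyMeasurable, ?_⟩
    apply HasFiniteIntegral.of_bounded (C := ‖E 0‖ + C)
    filter_upwards with ω
    rw [norm_smul, cantorChar_norm, one_mul]
    exact hEbd ω
  have hint2 : Integrable (fun ω => cantorChar I ω • E (g + ω)) m := by
    refine ⟨((cantorChar_continuous I).smul (hEcont.comp hTcont)).aestronglyMeasurable, ?_⟩
    apply HasFiniteIntegral.of_bounded (C := ‖E 0‖ + C)
    filter_upwards with ω
    rw [norm_smul, cantorChar_norm, one_mul]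
    exact hEbd _
  set J := ∫ ω, cantorChar I ω • E ω ∂m with hJ
  -- translation invariance
  have step1 : J = ∫ ω, cantorChar I (g + ω) • E (g + ω) ∂m := by
    rw [hJ]
    conv_lhs => rw [← hinv g]
    rw [integral_map hTcont.aemeasurable]
    rw [hinv g]
    exact ((cantorChar_continuous I).smul hEcont).aestronglyMeasurable
  have step2 : J = - ∫ ω, cantorChar I ω • E (g + ω) ∂m := by
    rw [step1, ← integral_neg]
    congr 1
    funext ω
    rw [hflip ω, neg_smul]
  have step3 : (2:ℝ) • J = ∫ ω, cantorChar I ω • (E ω - E (g + ω)) ∂m := by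
    have : (2:ℝ) • J = J - (- J) := by
      rw [sub_neg_eq_add, two_smul]
    rw [this]
    nth_rewrite 2 [step2]
    rw [neg_neg, ← integral_sub hint1 hint2]
    congr 1
    funext ω
    rw [smul_sub]
  have hptwise : ∀ ω, ‖cantorChar I ω • (E ω - E (g + ω))‖ ≤ C * (2:ℝ) ^ (-(α * (n:ℝ))) := by
    intro ω
    rw [norm_smul, cantorChar_norm, one_mul]
    apply hHolder n ω (g + ω)
    intro i hi
    simp [hgne i (Nat.ne_of_lt hi)]
  have hbound : ‖(2:ℝ) • J‖ ≤ C * (2:ℝ) ^ (-(α * (n:ℝ))) := by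
    rw [step3]
    calc ‖∫ ω, cantorChar I ω • (E ω - E (g + ω)) ∂m‖
        ≤ C * (2:ℝ) ^ (-(α * (n:ℝ))) * (m Set.univ).toReal :=
          norm_integral_le_of_norm_le_const (Filter.Eventually.of_forall hptwise)
      _ = C * (2:ℝ) ^ (-(α * (n:ℝ))) := by simp
  rw [norm_smul] at hbound
  simp only [Real.norm_ofNat] at hbound
  linarith
end

section
/- Let (Ω, 𝔄, m) be a σ-finite measure space on a standard Borel space, let φ : Ω → 𝕋 be measurable, let H = L²(Ω, m; ℂ), and let H₁ ⊆ H be a closed linear subspace such that conj(φ)·u ∈ H₁ whenever u ∈ H₁ (H₁ is invariant under the adjoint M* of the unitary multiplication operator M_φ u = φ·u). Let S be an arbitrary set of bounded sequences ℕ → ℂ. Consider the assertions: (i) for all u, v ∈ H₁ the sequence (n ↦ ∫_Ω conj(φ(ω))ⁿ·u(ω)·conj(v(ω)) dm(ω))_{n∈ℕ} belongs to S; (ii) for all u ∈ H₁ and h ∈ H the sequence (n ↦ ∫_Ω conj(φ(ω))ⁿ·u(ω)·conj(h(ω)) dm(ω))_{n∈ℕ} belongs to S; (iii) for every S-small analytic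 set D ⊆ 𝕋, every u ∈ H₁ and every h ∈ H, ∫_{φ⁻¹(D)} u(ω)·conj(h(ω)) dm(ω) = 0 (i.e. the function 1_{φ⁻¹(D)}·h is orthogonal to H₁). Then (i) and (ii) are equivalent, and they imply (iii). -/
open MeasureTheory Filter Topology

/-- `S`-continuity of a measure on the circle: the sequence of its nonnegative Fourier
coefficients belongs to `S`. -/
def SContinuous (S : Set (ℕ → ℂ)) (σ : Measure Circle) : Prop :=
  (fun n : ℕ => ∫ z : Circle, (z : ℂ) ^ (-(n : ℤ)) ∂σ) ∈ S

/-- `S`-small subsets of the circle. -/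
def SSmall (S : Set (ℕ → ℂ)) (D : Set Circle) : Prop :=
  ∀ σ : Measure Circle, IsFiniteMeasure σ → SContinuous S σ → σ D = 0

/-- **Bayart–Matheron, Lemma 3.3.** Let `M = M_φ` be the unitary multiplication operator on
`H = L²(Ω,m)` associated with a measurable `φ : Ω → 𝕋`, and let `H₁` be a closed subspace of
`H` invariant under `M*` (multiplication by `conj φ`). Consider:
(i) `M*` is `S`-mixing on `H₁`; (ii) the analogous property for `u ∈ H₁`, `h ∈ H`;
(iii) `1_{φ⁻¹(D)}·h ⊥ H₁` for every `S`-small analytic `D ⊆ 𝕋` and `h ∈ H`.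
Then (i) and (ii) are equivalent and imply (iii). -/
theorem multiplication_operator_SMixing
    {Ω : Type*} [MeasurableSpace Ω] [StandardBorelSpace Ω]
    (m : Measure Ω) [SigmaFinite m]
    (φ : Ω → Circle) (hφ : Measurable φ)
    (H₁ : Submodule ℂ (Lp ℂ 2 m)) (hH₁ : IsClosed (H₁ : Set (Lp ℂ 2 m)))
    (hinv : ∀ u : Lp ℂ 2 m, u ∈ H₁ → ∃ v : Lp ℂ 2 m, v ∈ H₁ ∧
      (v : Ω → ℂ) =ᵐ[m] fun ω => (starRingEnd ℂ) ((φ ω : ℂ)) * u ω)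
    (S : Set (ℕ → ℂ)) :
    ((∀ u ∈ H₁, ∀ v ∈ H₁,
        (fun n : ℕ => ∫ ω, ((starRingEnd ℂ) ((φ ω : ℂ))) ^ n * u ω *
          (starRingEnd ℂ) (v ω) ∂m) ∈ S) ↔
      (∀ u ∈ H₁, ∀ h : Lp ℂ 2 m,
        (fun n : ℕ => ∫ ω, ((starRingEnd ℂ) ((φ ω : ℂ))) ^ n * u ω *
          (starRingEnd ℂ) (h ω) ∂m) ∈ S)) ∧
    ((∀ u ∈ H₁, ∀ v ∈ H₁,
        (fun n : ℕ => ∫ ω, ((starRingEnd ℂ) ((φ ω : ℂ))) ^ n * u ω *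
          (starRingEnd ℂ) (v ω) ∂m) ∈ S) →
      ∀ D : Set Circle, AnalyticSet D → SSmall S D →
        ∀ u ∈ H₁, ∀ h : Lp ℂ 2 m,
          (∫ ω in φ ⁻¹' D, u ω * (starRingEnd ℂ) (h ω) ∂m) = 0) := by
  haveI : CompleteSpace H₁ := hH₁.completeSpace_coe
  -- iterated invariance
  have hiter : ∀ n : ℕ, ∀ u, u ∈ H₁ → ∃ v, v ∈ H₁ ∧
      (v : Ω → ℂ) =ᵐ[m] fun ω => ((starRingEnd ℂ) ((φ ω : ℂ))) ^ n * u ω := by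
    intro n
    induction n with
    | zero =>
      exact fun u hu => ⟨u, hu, Filter.Eventually.of_forall fun ω => by simp⟩
    | succ n ih =>
      intro u hu
      obtain ⟨v, hv, hve⟩ := ih u hu
      obtain ⟨w, hw, hwe⟩ := hinv v hv
      refine ⟨w, hw, ?_⟩
      filter_upwards [hve, hwe] with ω h1 h2
      rw [h2, h1]; ring
  -- integrals as inner products
  have hint : ∀ v h : Lp ℂ 2 m,
      (∫ ω, (v : Ω → ℂ) ω * (starRingEnd ℂ) ((h : Ω → ℂ) ω) ∂m)
        = (starRingEnd ℂ) (@inner ℂ _ _ v h) := by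
    intro v h
    rw [MeasureTheory.L2.inner_def, ← integral_conj]
    refine integral_congr_ae (Filter.Eventually.of_forall fun ω => ?_)
    simp [RCLike.inner_apply, map_mul, mul_comm]
  -- sequences only depend on the projection of `h` on `H₁`
  have hmain : ∀ u, u ∈ H₁ → ∀ h : Lp ℂ 2 m,
      (fun n : ℕ => ∫ ω, ((starRingEnd ℂ) ((φ ω : ℂ))) ^ n * u ω *
          (starRingEnd ℂ) (h ω) ∂m)
        = fun n : ℕ => ∫ ω, ((starRingEnd ℂ) ((φ ω : ℂ))) ^ n * u ω *
          (starRingEnd ℂ) (((Submodule.orthogonalProjectionOnto H₁ h : Lp ℂ 2 m) : Ω → ℂ) ω) ∂m := by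
    intro u hu h
    funext n
    obtain ⟨v, hv, hve⟩ := hiter n u hu
    have e1 : (∫ ω, ((starRingEnd ℂ) ((φ ω : ℂ))) ^ n * u ω * (starRingEnd ℂ) (h ω) ∂m)
        = ∫ ω, (v : Ω → ℂ) ω * (starRingEnd ℂ) ((h : Ω → ℂ) ω) ∂m := by
      refine integral_congr_ae ?_
      filter_upwards [hve] with ω hω
      rw [hω]
    have e2 : (∫ ω, ((starRingEnd ℂ) ((φ ω : ℂ))) ^ n * u ω *
          (starRingEnd ℂ) (((Submodule.orthogonalProjectionOnto H₁ h : Lp ℂ 2 m) : Ω → ℂ) ω) ∂m)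
        = ∫ ω, (v : Ω → ℂ) ω *
            (starRingEnd ℂ) (((Submodule.orthogonalProjectionOnto H₁ h : Lp ℂ 2 m) : Ω → ℂ) ω) ∂m := by
      refine integral_congr_ae ?_
      filter_upwards [hve] with ω hω
      rw [hω]
    rw [e1, e2, hint, hint]
    congr 1
    have horth : h - (Submodule.orthogonalProjectionOnto H₁ h : Lp ℂ 2 m) ∈ H₁ᗮ :=
      Submodule.sub_starProjection_mem_orthogonal (K := H₁) h
    have h0 : (inner ℂ v (h - (Submodule.orthogonalProjectionOnto H₁ h : Lp ℂ 2 m)) : ℂ) = 0 :=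
      Submodule.inner_right_of_mem_orthogonal hv horth
    rw [inner_sub_right] at h0
    exact (sub_eq_zero.mp h0).symm ▸ rfl
  constructor
  · constructor
    · intro hi u hu h
      rw [hmain u hu h]
      exact hi u hu _ (Submodule.orthogonalProjectionOnto H₁ h).2
    · intro hii u hu v hv
      exact hii u hu v
  · intro hi D hD hDsmall u hu h
    -- the positive measure `σ = φ_*(|u|² m)`
    set dens : Ω → NNReal := fun ω => ‖(u : Ω → ℂ) ω‖₊ ^ 2 with hdens_def
    have hdens_aemeas : AEMeasurable dens m := by
      exact ((Lp.aestronglyMeasurable u).aemeasurable.nnnorm.pow_const 2)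
    set μ : Measure Ω := m.withDensity fun ω => (dens ω : ENNReal) with hμ_def
    have hInt : Integrable (fun ω => (starRingEnd ℂ) ((u : Ω → ℂ) ω) * (u : Ω → ℂ) ω) m := by
      have := MeasureTheory.L2.integrable_inner (𝕜 := ℂ) u u
      simpa [RCLike.inner_apply, RCLike.conj_mul] using this
    haveI hμfin : IsFiniteMeasure μ := by
      constructor
      rw [hμ_def, withDensity_apply _ MeasurableSet.univ, setLIntegral_univ]
      have := hInt.hasFiniteIntegral
      rw [HasFiniteIntegral] at this
      refine lt_of_le_of_lt (le_of_eq (lintegral_congr fun ω => ?_)) this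
      simp [hdens_def, nnnorm_mul, RCLike.nnnorm_conj, sq, ENNReal.coe_mul, enorm_eq_nnnorm]
    set σ : Measure Circle := μ.map φ with hσ_def
    haveI : IsFiniteMeasure σ := by
      rw [hσ_def]; infer_instance
    -- S-continuity of σ
    have hσcont : SContinuous S σ := by
      have hseq := hi u hu u hu
      have heq : (fun n : ℕ => ∫ z : Circle, (z : ℂ) ^ (-(n : ℤ)) ∂σ)
          = fun n : ℕ => ∫ ω, ((starRingEnd ℂ) ((φ ω : ℂ))) ^ n * u ω *
              (starRingEnd ℂ) (u ω) ∂m := by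
        funext n
        have hcont : Continuous fun z : Circle => (z : ℂ) ^ (-(n : ℤ)) := by
          have hic : Continuous fun z : Circle => z⁻¹ := continuous_inv
          have hcc : Continuous fun z : Circle => (z : ℂ) := continuous_induced_dom
          have : Continuous fun z : Circle => ((z⁻¹ : Circle) : ℂ) ^ n :=
            (hcc.comp hic).pow n
          convert this using 1
          funext z
          rw [Circle.coe_inv, zpow_neg, zpow_natCast, inv_pow]
        rw [hσ_def, integral_map hφ.aemeasurable hcont.aestronglyMeasurable,
          hμ_def, integral_withDensity_eq_integral_smul₀ hdens_aemeas]
        refine integral_congr_ae (Filter.Eventually.of_forall fun ω => ?_)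
        have h1 : ((φ ω : ℂ)) ^ (-(n : ℤ)) = ((starRingEnd ℂ) ((φ ω : ℂ))) ^ n := by
          rw [zpow_neg, zpow_natCast, ← inv_pow, ← Circle.coe_inv, Circle.coe_inv_eq_conj]
        have h2 : (u : Ω → ℂ) ω * (starRingEnd ℂ) ((u : Ω → ℂ) ω)
            = ((‖(u : Ω → ℂ) ω‖ : ℝ) : ℂ) ^ 2 := by
          rw [Complex.mul_conj]
          norm_cast
          simp [Complex.normSq_eq_norm_sq]
        calc dens ω • ((φ ω : ℂ)) ^ (-(n : ℤ))
            = ((‖(u : Ω → ℂ) ω‖ : ℝ) : ℂ) ^ 2 * ((starRingEnd ℂ) ((φ ω : ℂ))) ^ n := by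
              rw [h1, NNReal.smul_def, Complex.real_smul, hdens_def]
              push_cast
              ring
          _ = ((starRingEnd ℂ) ((φ ω : ℂ))) ^ n * ((u : Ω → ℂ) ω)
                * (starRingEnd ℂ) ((u : Ω → ℂ) ω) := by rw [mul_assoc, ← h2]; ring
      rw [SContinuous, heq]
      exact hseq
    -- apply S-smallness
    have hσD : σ D = 0 := hDsmall σ inferInstance hσcont
    set E := toMeasurable σ D with hE_def
    have hDE : D ⊆ E := subset_toMeasurable σ D
    have hEmeas : MeasurableSet E := measurableSet_toMeasurable σ D
    have hσE : σ E = 0 := by rw [hE_def, measure_toMeasurable]; exact hσD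
    have hμE : μ (φ ⁻¹' E) = 0 := by
      rw [← Measure.map_apply hφ hEmeas]; exact hσE
    have hlz : (fun ω => (dens ω : ENNReal)) =ᵐ[m.restrict (φ ⁻¹' E)] 0 := by
      rw [hμ_def, withDensity_apply _ (hφ hEmeas)] at hμE
      exact (lintegral_eq_zero_iff' (hdens_aemeas.coe_nnreal_ennreal.restrict)).mp hμE
    have hzeroE : (fun ω => (u : Ω → ℂ) ω * (starRingEnd ℂ) ((h : Ω → ℂ) ω))
        =ᵐ[m.restrict (φ ⁻¹' E)] 0 := by
      filter_upwards [hlz] with ω hω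
      have : ‖(u : Ω → ℂ) ω‖₊ = 0 := by
        simpa [hdens_def, pow_eq_zero_iff] using hω
      have hu0 : (u : Ω → ℂ) ω = 0 := nnnorm_eq_zero.mp this
      simp [hu0]
    have hzeroD : (fun ω => (u : Ω → ℂ) ω * (starRingEnd ℂ) ((h : Ω → ℂ) ω))
        =ᵐ[m.restrict (φ ⁻¹' D)] 0 :=
      hzeroE.filter_mono (ae_mono (Measure.restrict_mono (Set.preimage_mono hDE) le_rfl))
    calc (∫ ω in φ ⁻¹' D, u ω * (starRingEnd ℂ) (h ω) ∂m)
        = ∫ _ω in φ ⁻¹' D, (0 : ℂ) ∂m := integral_congr_ae hzeroD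
      _ = 0 := integral_zero _ _
end

section
/- Let X be a complex Banach space and T : X → X a continuous linear operator. Assume there exists u ∈ X such that Tⁿu ≠ 0 for every n ≥ 0 and ∑_{n=0}^∞ 1/‖Tⁿu‖ < ∞. Then the set HC(T) of hypercyclic vectors for T is Haar-null: there exists a Borel probability measure ν on X such that ν(x + HC(T)) = 0 (outer measure) for every x ∈ X. -/
open MeasureTheory Filter Topology
open scoped ENNReal NNReal

/-- The set of hypercyclic vectors of a continuous linear operator. -/
def HypercyclicVectors {X : Type*} [NormedAddCommGroup X] [NormedSpace ℂ X]
    (T : X →L[ℂ] X) : Set X :=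
  {x : X | Dense (Set.range fun n : ℕ => (T ^ n) x)}

/-- A Haar-null set in the sense of Christensen. -/
def IsHaarNull {X : Type*} [NormedAddCommGroup X] [NormedSpace ℂ X] [MeasurableSpace X]
    (A : Set X) : Prop :=
  ∃ ν : Measure X, IsProbabilityMeasure ν ∧ ∀ x : X, ν ((fun a => x + a) '' A) = 0

/-- **Bayart–Matheron, Proposition 6.7.** If `T` is a continuous linear operator on a complex
Banach space and some vector `u` satisfies `∑ 1/‖Tⁿu‖ < ∞`, then the set of hypercyclic
vectors of `T` is Haar-null. -/
theorem hypercyclicVectors_haarNull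
    {X : Type*} [NormedAddCommGroup X] [NormedSpace ℂ X] [CompleteSpace X]
    [MeasurableSpace X] [BorelSpace X]
    (T : X →L[ℂ] X) (u : X) (hne : ∀ n : ℕ, (T ^ n) u ≠ 0)
    (hsum : Summable fun n : ℕ => 1 / ‖(T ^ n) u‖) :
    IsHaarNull (HypercyclicVectors T) := by
  classical
  have hu : u ≠ 0 := by simpa using hne 0
  -- norming functionals for the orbit of `u`
  choose g hg1 hg2 using fun m : ℕ => exists_dual_vector ℂ ((T ^ m) u) (norm_ne_zero_iff.2 (hne m))
  set r : ℕ → ℝ := fun m => 1 / ‖(T ^ m) u‖ with hr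
  have hrpos : ∀ m, 0 < r m := fun m => by
    simp only [hr, one_div, inv_pos, norm_pos_iff]; exact hne m
  -- a measurable (Gδ) superset of the hypercyclic vectors
  set E : Set X := ⋂ N : ℕ, ⋃ m : ℕ, ⋃ _ : N ≤ m, {z : X | ‖g m ((T ^ m) z)‖ < 1} with hE
  have hopen : ∀ m : ℕ, IsOpen {z : X | ‖g m ((T ^ m) z)‖ < 1} := fun m =>
    isOpen_lt (((g m).comp (T ^ m)).continuous.norm) continuous_const
  have hEmeas : MeasurableSet E :=
    MeasurableSet.iInter fun N => MeasurableSet.iUnion fun m =>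
      MeasurableSet.iUnion fun _ => (hopen m).measurableSet
  -- HC(T) ⊆ E
  have hHCE : HypercyclicVectors T ⊆ E := by
    intro z hz
    have hz' : DenseRange fun n : ℕ => (T ^ n) z := hz
    simp only [hE, Set.mem_iInter, Set.mem_iUnion, Set.mem_setOf_eq]
    intro N
    suffices h : ∃ m, N ≤ m ∧ ‖(T ^ m) z‖ < 1 by
      obtain ⟨m, hm1, hm2⟩ := h
      refine ⟨m, hm1, lt_of_le_of_lt ?_ hm2⟩
      calc ‖g m ((T ^ m) z)‖ ≤ ‖g m‖ * ‖(T ^ m) z‖ := (g m).le_opNorm _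
        _ = ‖(T ^ m) z‖ := by rw [hg1 m, one_mul]
    by_cases hzero : ∃ m, (T ^ m) z = 0
    · obtain ⟨m, hm⟩ := hzero
      refine ⟨N + m, Nat.le_add_right _ _, ?_⟩
      have hsplit : (T ^ (N + m)) z = (T ^ N) ((T ^ m) z) := by
        rw [pow_add]; rfl
      rw [hsplit, hm, map_zero, norm_zero]; exact one_pos
    · push_neg at hzero
      set F : Finset ℝ := (Finset.range (N + 1)).image fun m => ‖(T ^ m) z‖ with hF
      have hFne : F.Nonempty := ⟨‖z‖, by
        simp only [hF, Finset.mem_image]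
        exact ⟨0, Finset.mem_range.2 (Nat.succ_pos _), by simp⟩⟩
      set ε : ℝ := min 1 (F.min' hFne) with hε
      have hεpos : 0 < ε := by
        refine lt_min one_pos ?_
        obtain ⟨m, -, hm⟩ := Finset.mem_image.1 (F.min'_mem hFne)
        rw [← hm]
        exact norm_pos_iff.2 (hzero m)
      obtain ⟨m, hm⟩ := hz'.exists_dist_lt 0 (by positivity : (0:ℝ) < ε / 2)
      rw [dist_zero_left] at hm
      have hε1 : ε ≤ 1 := min_le_left _ _
      refine ⟨m, ?_, lt_of_lt_of_le hm (by linarith)⟩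
      by_contra hmN
      push_neg at hmN
      have hmem : ‖(T ^ m) z‖ ∈ F := Finset.mem_image.2 ⟨m,
        Finset.mem_range.2 (by omega), rfl⟩
      have hge : ε ≤ ‖(T ^ m) z‖ := le_trans (min_le_right _ _) (F.min'_le _ hmem)
      linarith
  -- the base measure on ℂ : normalized Lebesgue measure on the unit ball
  set B : Set ℂ := Metric.ball (0 : ℂ) 1 with hB
  have hBvol : volume B = NNReal.pi := by
    simp [hB, Complex.volume_ball]
  set ν₀ : Measure ℂ := ((NNReal.pi : ℝ≥0∞))⁻¹ • volume.restrict B with hν₀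
  have hπ0 : (NNReal.pi : ℝ≥0∞) ≠ 0 := by
    simp [← NNReal.coe_eq_zero, Real.pi_ne_zero]
  have hπtop : (NNReal.pi : ℝ≥0∞) ≠ ⊤ := ENNReal.coe_ne_top
  have hν₀prob : IsProbabilityMeasure ν₀ := by
    constructor
    rw [hν₀, Measure.smul_apply, Measure.restrict_apply MeasurableSet.univ,
      Set.univ_inter, hBvol, smul_eq_mul, ENNReal.inv_mul_cancel hπ0 hπtop]
  -- the witness measure : pushforward of ν₀ under ζ ↦ ζ • u
  set f : ℂ → X := fun ζ => ζ • u with hf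
  have hfcont : Continuous f := continuous_id.smul continuous_const
  have hfm : Measurable f := hfcont.measurable
  refine ⟨ν₀.map f, Measure.isProbabilityMeasure_map hfm.aemeasurable, fun x => ?_⟩
  have himg : (fun a => x + a) '' E = (fun y => -x + y) ⁻¹' E := by
    ext y
    constructor
    · rintro ⟨a, ha, rfl⟩; simpa using ha
    · intro h; exact ⟨-x + y, h, add_neg_cancel_left x y⟩
  have hsub : (fun a => x + a) '' HypercyclicVectors T ⊆ (fun y => -x + y) ⁻¹' E := by
    rw [← himg]
    exact Set.image_mono hHCE
  refine measure_mono_null hsub ?_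
  have hpre : MeasurableSet ((fun y => -x + y) ⁻¹' E) :=
    hEmeas.preimage (measurable_const_add (-x))
  rw [Measure.map_apply hfm hpre]
  -- the preimage of (a translate of) `E` is contained in a limsup of small balls
  set c : ℕ → ℂ := fun m => g m ((T ^ m) x) / (‖(T ^ m) u‖ : ℂ) with hc
  have hkey : f ⁻¹' ((fun y => -x + y) ⁻¹' E) ⊆
      limsup (fun m => Metric.ball (c m) (r m)) atTop := by
    intro ζ hζ
    rw [mem_limsup_iff_frequently_mem, frequently_atTop]
    intro N
    simp only [hE, Set.mem_preimage, Set.mem_iInter, Set.mem_iUnion, Set.mem_setOf_eq] at hζ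
    obtain ⟨m, hmN, hm⟩ := hζ N
    refine ⟨m, hmN, ?_⟩
    have hnpos : (0:ℝ) < ‖(T ^ m) u‖ := norm_pos_iff.2 (hne m)
    have hnorm0 : (‖(T ^ m) u‖ : ℂ) ≠ 0 := by
      exact_mod_cast ne_of_gt hnpos
    have hval : g m ((T ^ m) (-x + ζ • u)) = (‖(T ^ m) u‖ : ℂ) * (ζ - c m) := by
      have h1 : g m ((T ^ m) (-x + ζ • u))
          = ζ * (‖(T ^ m) u‖ : ℂ) - g m ((T ^ m) x) := by
        simp only [map_add, map_neg, _root_.map_smul, hg2 m, smul_eq_mul]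
        exact neg_add_eq_sub _ _
      rw [h1, hc]
      field_simp
    rw [hval] at hm
    rw [norm_mul, Complex.norm_real, Real.norm_eq_abs, abs_of_pos hnpos] at hm
    rw [Metric.mem_ball, dist_eq_norm, hr]
    rw [lt_div_iff₀ hnpos, mul_comm]
    exact hm
  refine measure_mono_null hkey ?_
  -- Borel–Cantelli
  have hsummable : Summable fun m => (r m) ^ 2 := by
    have hnn : ∀ m, 0 ≤ r m := fun m => (hrpos m).le
    refine Summable.of_nonneg_of_le (fun m => sq_nonneg _) (fun m => ?_)
      (hsum.mul_left (∑' n, r n))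
    have hle : r m ≤ ∑' n, r n := Summable.le_tsum hsum m fun n _ => hnn n
    have : r m * r m ≤ (∑' n, r n) * r m :=
      mul_le_mul_of_nonneg_right hle (hnn m)
    calc (r m) ^ 2 = r m * r m := sq (r m)
      _ ≤ (∑' n, r n) * r m := this
  refine measure_limsup_atTop_eq_zero ?_
  have hball_le : ∀ m, ν₀ (Metric.ball (c m) (r m)) ≤ ENNReal.ofReal ((r m) ^ 2) := by
    intro m
    rw [hν₀, Measure.smul_apply, smul_eq_mul]
    calc (NNReal.pi:ℝ≥0∞)⁻¹ * (volume.restrict B) (Metric.ball (c m) (r m))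
        ≤ (NNReal.pi:ℝ≥0∞)⁻¹ * (ENNReal.ofReal (r m) ^ 2 * NNReal.pi) := by
          gcongr
          exact (Measure.restrict_apply_le _ _).trans
            (le_of_eq (Complex.volume_ball _ _))
      _ = ENNReal.ofReal (r m) ^ 2 * ((NNReal.pi:ℝ≥0∞) * (NNReal.pi:ℝ≥0∞)⁻¹) := by ring
      _ = ENNReal.ofReal ((r m) ^ 2) := by
          rw [ENNReal.mul_inv_cancel hπ0 hπtop, mul_one,
            ← ENNReal.ofReal_pow (hrpos m).le]
  have htsum : ∑' m, ν₀ (Metric.ball (c m) (r m)) ≤ ∑' m, ENNReal.ofReal ((r m) ^ 2) :=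
    ENNReal.tsum_le_tsum hball_le
  refine ne_top_of_le_ne_top ?_ htsum
  rw [← ENNReal.ofReal_tsum_of_nonneg (fun m => sq_nonneg _) hsummable]
  exact ENNReal.ofReal_ne_top
end

section
/- Fix a real number p with 1 ≤ p < ∞ and let X = ℓᵖ(ℕ; ℂ). Let w : ℕ → ℂ be a bounded sequence with w(n) ≠ 0 for every n ≥ 1, and let B_w : X → X be a continuous linear operator satisfying (B_w x)(n) = w(n+1)·x(n+1) for every x ∈ X and every n ∈ ℕ (the weighted backward shift with weight sequence w). If ∑_{n=1}^∞ 1/|w(1)·w(2)⋯w(n)|^{p/(p+1)} < ∞, then HC(B_w) is Haar-null: there exists a Borel probability measure ν on X such that ν(x + HC(B_w)) = 0 (outer measure) for every x ∈ X. -/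
open MeasureTheory Filter Topology

noncomputable instance (p : ENNReal) [Fact (1 ≤ p)] :
    MeasurableSpace (lp (fun _ : ℕ => ℂ) p) := borel _

instance (p : ENNReal) [Fact (1 ≤ p)] : BorelSpace (lp (fun _ : ℕ => ℂ) p) := ⟨rfl⟩

noncomputable def clampC (z : ℂ) : ℂ := ((2 / max 2 ‖z‖ : ℝ)) • z

lemma continuous_clampC : Continuous clampC := by
  refine Continuous.smul (f := fun z : ℂ => (2 / max 2 ‖z‖ : ℝ)) (g := fun z : ℂ => z) ?_ continuous_id
  exact continuous_const.div (continuous_const.max continuous_norm)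
    (fun z => by positivity)

lemma clampC_eq {z : ℂ} (hz : ‖z‖ ≤ 2) : clampC z = z := by
  unfold clampC
  rw [max_eq_left hz]
  norm_num

lemma orbit_often_small {X : Type*} [NormedAddCommGroup X] [NormedSpace ℂ X]
    (T : X →L[ℂ] X) (y u : X) (hu : ‖u‖ = 1)
    (hy : Dense (Set.range fun n : ℕ => (T ^ n) y)) (N : ℕ) :
    ∃ m, N ≤ m ∧ ‖(T ^ m) y‖ < 1 := by
  classical
  set S : Set X := ↑((Finset.range N).image fun k => (T ^ k) y) with hS
  have hSfin : S.Finite := ((Finset.range N).image fun k => (T ^ k) y).finite_toSet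
  have hball : (Metric.ball (0 : X) 1).Infinite := by
    apply Set.infinite_of_injective_forall_mem
      (f := fun k : ℕ => (((k : ℝ) + 2)⁻¹) • u)
    · intro a b hab
      have h := congrArg norm hab
      simp only [norm_smul, hu, Real.norm_eq_abs, mul_one] at h
      have h2 : ∀ k : ℕ, |((k : ℝ) + 2)⁻¹| = ((k : ℝ) + 2)⁻¹ :=
        fun k => abs_of_pos (by positivity)
      rw [h2, h2, inv_inj] at h
      exact_mod_cast add_right_cancel h
    · intro k
      rw [Metric.mem_ball, dist_zero_right, norm_smul, hu, Real.norm_eq_abs, mul_one,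
        abs_of_pos (by positivity : (0:ℝ) < ((k:ℝ)+2)⁻¹)]
      rw [inv_lt_one_iff₀]
      right; linarith [Nat.cast_nonneg (α := ℝ) k]
  have hU : IsOpen (Metric.ball (0 : X) 1 \ S) :=
    Metric.isOpen_ball.sdiff hSfin.isClosed
  have hUne : (Metric.ball (0 : X) 1 \ S).Nonempty := (hball.diff hSfin).nonempty
  obtain ⟨v, hv, hvU⟩ := hy.exists_mem_open hU hUne
  obtain ⟨m, rfl⟩ := hv
  refine ⟨m, ?_, by simpa [mem_ball_zero_iff] using hvU.1⟩
  by_contra h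
  push_neg at h
  exact hvU.2 (by
    rw [hS]
    exact Finset.mem_coe.2 (Finset.mem_image.2 ⟨m, Finset.mem_range.2 h, rfl⟩))


lemma tsum_measure_ne_top_of_bound {α : Type*} [MeasurableSpace α] (μ : Measure α)
    [IsProbabilityMeasure μ] (F : ℕ → Set α) (g : ℕ → ℝ) (hg : Summable g)
    (hgnn : ∀ m, 0 ≤ g m)
    (hbound : ∀ m, μ (F (m + 1)) ≤ ENNReal.ofReal (g m)) :
    ∑' m, μ (F m) ≠ ⊤ := by
  rw [tsum_eq_zero_add' ENNReal.summable]
  apply ENNReal.add_ne_top.2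
  refine ⟨ne_top_of_le_ne_top ENNReal.one_ne_top prob_le_one, ?_⟩
  apply ne_top_of_le_ne_top (b := ENNReal.ofReal (∑' m, g m)) ENNReal.ofReal_ne_top
  rw [ENNReal.ofReal_tsum_of_nonneg hgnn hg]
  exact ENNReal.tsum_le_tsum hbound

set_option maxHeartbeats 1000000 in
/-- **Bayart–Matheron, Corollary 6.8.** Let `B_w` be a weighted backward shift on
`ℓᵖ(ℕ)`, `1 ≤ p < ∞`, with bounded weight sequence `w`. If
`∑ 1/|w₁⋯w_n|^{p/(p+1)} < ∞`, then the set of hypercyclic vectors of `B_w` is Haar-null. -/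
theorem weightedShift_hypercyclicVectors_haarNull
    (p : ℝ) (hp : 1 ≤ p) [Fact (1 ≤ ENNReal.ofReal p)]
    (w : ℕ → ℂ) (hwbdd : ∃ C : ℝ, ∀ n, ‖w n‖ ≤ C) (hw0 : ∀ n : ℕ, 1 ≤ n → w n ≠ 0)
    (T : lp (fun _ : ℕ => ℂ) (ENNReal.ofReal p) →L[ℂ] lp (fun _ : ℕ => ℂ) (ENNReal.ofReal p))
    (hT : ∀ (x : lp (fun _ : ℕ => ℂ) (ENNReal.ofReal p)) (n : ℕ),
      (T x : ∀ _ : ℕ, ℂ) n = w (n + 1) * (x : ∀ _ : ℕ, ℂ) (n + 1))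
    (hsum : Summable fun n : ℕ =>
      1 / (‖∏ k ∈ Finset.Icc 1 (n + 1), w k‖ ^ (p / (p + 1)))) :
    IsHaarNull (HypercyclicVectors T) := by
  classical
  have hp0 : (0:ℝ) < p := lt_of_lt_of_le one_pos hp
  have hqp : (ENNReal.ofReal p).toReal = p := ENNReal.toReal_ofReal hp0.le
  have hq0 : (ENNReal.ofReal p) ≠ 0 := by
    intro h
    rw [ENNReal.ofReal_eq_zero] at h
    linarith
  have hp1 : (0:ℝ) < p + 1 := by linarith
  set nW : ℕ → ℝ := fun m => ‖∏ k ∈ Finset.Icc 1 m, w k‖ with hnW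
  have hnWpos : ∀ m, 0 < nW m := by
    intro m
    apply norm_pos_iff.mpr
    exact Finset.prod_ne_zero_iff.2 fun k hk => hw0 k (Finset.mem_Icc.1 hk).1
  set A : ℕ → ℝ := fun m => nW m ^ (-(1/(p+1))) with hA
  have hApos : ∀ m, 0 < A m := fun m => Real.rpow_pos_of_pos (hnWpos m) _
  set s : ℕ → ℝ := fun m => nW m ^ (-(p/(p+1))) with hs
  have hspos : ∀ m, 0 < s m := fun m => Real.rpow_pos_of_pos (hnWpos m) _
  have hAs : ∀ m, A m ^ p = s m := by
    intro m
    rw [hA, hs]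
    dsimp only
    rw [← Real.rpow_mul (hnWpos m).le]
    congr 1
    ring
  have hsA : ∀ m, 1 / nW m / A m = s m := by
    intro m
    have h := hnWpos m
    have h1 : nW m * A m = nW m ^ (p/(p+1)) := by
      rw [hA]
      dsimp only
      nth_rewrite 1 [← Real.rpow_one (nW m)]
      rw [← Real.rpow_add h]
      congr 1
      field_simp
      ring
    rw [div_div, h1, hs]
    dsimp only
    rw [Real.rpow_neg h.le, one_div]
  have hsum' : Summable fun n => s (n + 1) := by
    refine hsum.congr fun n => ?_
    rw [hs]
    dsimp only
    rw [Real.rpow_neg (hnWpos _).le, one_div]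
  have hsumS : Summable s := (summable_nat_add_iff 1).1 hsum'
  -- the vector v
  have hmemv : Memℓp (fun n : ℕ => ((A n : ℝ) : ℂ)) (ENNReal.ofReal p) := by
    apply memℓp_gen
    refine hsumS.congr fun n => ?_
    rw [hqp, Complex.norm_real, Real.norm_eq_abs, abs_of_pos (hApos n), hAs]
  set v : lp (fun _ : ℕ => ℂ) (ENNReal.ofReal p) := ⟨_, hmemv⟩ with hv
  have hvcoord : ∀ m : ℕ, (v : ∀ _ : ℕ, ℂ) m = ((A m : ℝ) : ℂ) := fun m => rfl
  -- the map Ψ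
  set j : ℝ × ℝ → ℂ := fun q => (q.1 : ℂ) + (q.2 : ℂ) * Complex.I with hj
  have hjcont : Continuous j := by
    apply Continuous.add
    · exact Complex.continuous_ofReal.comp continuous_fst
    · exact (Complex.continuous_ofReal.comp continuous_snd).mul continuous_const
  have hjre : ∀ q : ℝ × ℝ, (j q).re = q.1 := by intro q; simp [hj]
  have hjim : ∀ q : ℝ × ℝ, (j q).im = q.2 := by intro q; simp [hj]
  set Ψ : ℝ × ℝ → lp (fun _ : ℕ => ℂ) (ENNReal.ofReal p) :=
    fun q => clampC (j q) • v with hΨ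
  have hΨcont : Continuous Ψ := (continuous_clampC.comp hjcont).smul continuous_const
  have hΨmeas : Measurable Ψ := hΨcont.measurable
  -- the measure
  set I1 : Set ℝ := Set.Icc 0 1 with hI1
  haveI hprob1 : IsProbabilityMeasure (volume.restrict I1) := by
    constructor
    rw [Measure.restrict_apply_univ, hI1, Real.volume_Icc]
    norm_num
  set ρ : Measure (ℝ × ℝ) := (volume.restrict I1).prod (volume.restrict I1) with hρ
  haveI hprobρ : IsProbabilityMeasure ρ := by rw [hρ]; infer_instance
  refine ⟨Measure.map Ψ ρ, Measure.isProbabilityMeasure_map hΨmeas.aemeasurable, ?_⟩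
  intro x
  -- coordinate evaluation is continuous
  have heval : ∀ m : ℕ,
      Continuous fun y : lp (fun _ : ℕ => ℂ) (ENNReal.ofReal p) => (y : ∀ _ : ℕ, ℂ) m := by
    intro m
    apply LipschitzWith.continuous (K := 1)
    apply LipschitzWith.of_dist_le_mul
    intro y z
    have h := lp.norm_apply_le_norm hq0 (y - z) m
    rw [lp.coeFn_sub, Pi.sub_apply] at h
    simpa [dist_eq_norm] using h
  -- the superset B
  set C : ℕ → Set (lp (fun _ : ℕ => ℂ) (ENNReal.ofReal p)) :=
    fun m => {y | nW m * ‖(y : ∀ _ : ℕ, ℂ) m - (x : ∀ _ : ℕ, ℂ) m‖ ≤ 1} with hC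
  have hCclosed : ∀ m, IsClosed (C m) := by
    intro m
    have hcont : Continuous fun y : lp (fun _ : ℕ => ℂ) (ENNReal.ofReal p) =>
        nW m * ‖(y : ∀ _ : ℕ, ℂ) m - (x : ∀ _ : ℕ, ℂ) m‖ :=
      continuous_const.mul ((heval m).sub continuous_const).norm
    exact isClosed_le hcont continuous_const
  set B : Set (lp (fun _ : ℕ => ℂ) (ENNReal.ofReal p)) :=
    ⋂ N : ℕ, ⋃ m : ℕ, ⋃ _ : N ≤ m, C m with hB
  have hBmeas : MeasurableSet B :=
    MeasurableSet.iInter fun N => MeasurableSet.iUnion fun m =>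
      MeasurableSet.iUnion fun _ => (hCclosed m).measurableSet
  -- coordinate formula for powers of T
  have hcoordT : ∀ (m : ℕ) (y : lp (fun _ : ℕ => ℂ) (ENNReal.ofReal p)),
      ((T ^ m) y : ∀ _ : ℕ, ℂ) 0 = (∏ k ∈ Finset.Icc 1 m, w k) * (y : ∀ _ : ℕ, ℂ) m := by
    intro m
    induction m with
    | zero =>
      intro y
      simp [Finset.Icc_eq_empty (by omega : ¬ (1:ℕ) ≤ 0)]
    | succ n ih =>
      intro y
      have h1 : (T ^ (n+1)) y = (T ^ n) (T y) := by
        rw [pow_succ]; rfl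
      rw [h1, ih (T y), hT y n, Finset.prod_Icc_succ_top (by omega : 1 ≤ n + 1)]
      ring
  -- a unit vector
  set e : lp (fun _ : ℕ => ℂ) (ENNReal.ofReal p) := lp.single (ENNReal.ofReal p) 0 (1 : ℂ) with he
  have hue : ‖e‖ = 1 := by
    have h := lp.norm_single (p := ENNReal.ofReal p) (E := fun _ : ℕ => ℂ) (ENNReal.ofReal_pos.2 hp0)
      0 (1 : ℂ)
    simpa [he] using h
  -- inclusion into B
  have hsub : (fun a => x + a) '' HypercyclicVectors T ⊆ B := by
    rintro _ ⟨a, ha, rfl⟩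
    rw [hB]
    simp only [Set.mem_iInter, Set.mem_iUnion]
    intro N
    obtain ⟨m, hmN, hm⟩ := orbit_often_small T a e hue ha N
    refine ⟨m, hmN, ?_⟩
    rw [hC]
    simp only [Set.mem_setOf_eq]
    have hco : (x + a : lp (fun _ : ℕ => ℂ) (ENNReal.ofReal p)) m - (x : ∀ _ : ℕ, ℂ) m
        = (a : ∀ _ : ℕ, ℂ) m := by
      rw [lp.coeFn_add, Pi.add_apply]; ring
    rw [hco]
    have h1 : nW m * ‖(a : ∀ _ : ℕ, ℂ) m‖ = ‖((T ^ m) a : ∀ _ : ℕ, ℂ) 0‖ := by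
      rw [hcoordT m a, norm_mul, hnW]
    rw [h1]
    exact le_trans (lp.norm_apply_le_norm hq0 ((T ^ m) a) 0) hm.le
  -- the bad events
  set F : ℕ → Set (ℝ × ℝ) := fun m => Ψ ⁻¹' (C m) with hF
  have hFmeas : ∀ m, MeasurableSet (F m) := fun m => hΨmeas (hCclosed m).measurableSet
  have hFsub : Ψ ⁻¹' B ⊆ limsup F atTop := by
    intro z hz
    rw [mem_limsup_iff_frequently_mem, frequently_atTop]
    intro N
    rw [hB] at hz
    simp only [Set.mem_preimage, Set.mem_iInter, Set.mem_iUnion] at hz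
    obtain ⟨m, hm1, hm2⟩ := hz N
    exact ⟨m, hm1, hm2⟩
  -- measure bound on events
  have hρF : ∀ m, ρ (F m) ≤ ENNReal.ofReal (2 * s m) * ENNReal.ofReal (2 * s m) := by
    intro m
    set c : ℂ := (x : ∀ _ : ℕ, ℂ) m with hc
    set t : ℝ := 1 / nW m with ht
    have htpos : 0 < t := by rw [ht]; exact div_pos one_pos (hnWpos m)
    have hrect : F m ∩ I1 ×ˢ I1 ⊆
        (Set.Icc ((c.re - t)/A m) ((c.re + t)/A m)) ×ˢ
        (Set.Icc ((c.im - t)/A m) ((c.im + t)/A m)) := by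
      rintro ⟨z1, z2⟩ ⟨hzF, hzI⟩
      have hzI1 : z1 ∈ I1 := hzI.1
      have hzI2 : z2 ∈ I1 := hzI.2
      rw [hI1, Set.mem_Icc] at hzI1 hzI2
      have hnormj : ‖j (z1, z2)‖ ≤ 2 := by
        refine le_trans (Complex.norm_le_abs_re_add_abs_im _) ?_
        rw [hjre, hjim]
        have : |z1| ≤ 1 := abs_le.2 ⟨by linarith [hzI1.1], hzI1.2⟩
        have : |z2| ≤ 1 := abs_le.2 ⟨by linarith [hzI2.1], hzI2.2⟩
        simp only []
        linarith [abs_le.2 ⟨(by linarith [hzI1.1] : (-1:ℝ) ≤ z1), hzI1.2⟩,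
          abs_le.2 ⟨(by linarith [hzI2.1] : (-1:ℝ) ≤ z2), hzI2.2⟩]
      have hclamp : clampC (j (z1, z2)) = j (z1, z2) := clampC_eq hnormj
      have hcoΨ : (Ψ (z1, z2) : ∀ _ : ℕ, ℂ) m = j (z1, z2) * ((A m : ℝ) : ℂ) := by
        rw [hΨ]
        simp only [lp.coeFn_smul, Pi.smul_apply, hvcoord, smul_eq_mul, hclamp]
      rw [hF] at hzF
      simp only [Set.mem_preimage, hC, Set.mem_setOf_eq, hcoΨ] at hzF
      have h1 : ‖j (z1, z2) * ((A m : ℝ) : ℂ) - c‖ ≤ t := by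
        rw [ht, le_div_iff₀ (hnWpos m), mul_comm]
        exact hzF
      have hre : |z1 * A m - c.re| ≤ t := by
        have h2 := Complex.abs_re_le_norm (j (z1, z2) * ((A m : ℝ) : ℂ) - c)
        have h3 : (j (z1, z2) * ((A m : ℝ) : ℂ) - c).re = z1 * A m - c.re := by
          simp [Complex.sub_re, Complex.mul_re, hjre, hjim]
        rw [h3] at h2
        exact le_trans h2 h1
      have him : |z2 * A m - c.im| ≤ t := by
        have h2 := Complex.abs_im_le_norm (j (z1, z2) * ((A m : ℝ) : ℂ) - c)
        have h3 : (j (z1, z2) * ((A m : ℝ) : ℂ) - c).im = z2 * A m - c.im := by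
          simp [Complex.sub_im, Complex.mul_im, hjre, hjim]
        rw [h3] at h2
        exact le_trans h2 h1
      constructor
      · rw [Set.mem_Icc]
        rw [abs_le] at hre
        constructor
        · rw [div_le_iff₀ (hApos m)]
          linarith [hre.1]
        · rw [le_div_iff₀ (hApos m)]
          linarith [hre.2]
      · rw [Set.mem_Icc]
        rw [abs_le] at him
        constructor
        · rw [div_le_iff₀ (hApos m)]
          linarith [him.1]
        · rw [le_div_iff₀ (hApos m)]
          linarith [him.2]
    have hlen : (c.re + t)/A m - (c.re - t)/A m = 2 * s m := by
      rw [div_sub_div_same]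
      have : c.re + t - (c.re - t) = 2 * t := by ring
      rw [this, mul_div_assoc]
      rw [← hsA m, ht]
    have hlen2 : (c.im + t)/A m - (c.im - t)/A m = 2 * s m := by
      rw [div_sub_div_same]
      have : c.im + t - (c.im - t) = 2 * t := by ring
      rw [this, mul_div_assoc]
      rw [← hsA m, ht]
    calc ρ (F m) = ((volume.prod volume).restrict (I1 ×ˢ I1)) (F m) := by
          rw [hρ, Measure.prod_restrict]
      _ = (volume.prod volume) (F m ∩ I1 ×ˢ I1) := by
          rw [Measure.restrict_apply (hFmeas m)]
      _ ≤ (volume.prod volume)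
            ((Set.Icc ((c.re - t)/A m) ((c.re + t)/A m)) ×ˢ
             (Set.Icc ((c.im - t)/A m) ((c.im + t)/A m))) := measure_mono hrect
      _ = ENNReal.ofReal (2 * s m) * ENNReal.ofReal (2 * s m) := by
          rw [Measure.prod_prod, Real.volume_Icc, Real.volume_Icc, hlen, hlen2]
  -- summability of the measures
  have htsum : ∑' m, ρ (F m) ≠ ⊤ := by
    have hb : ∀ m : ℕ, s (m+1) ≤ ∑' n, s (n+1) :=
      fun m => Summable.le_tsum hsum' m fun j _ => (hspos _).le
    have hsum3 : Summable (fun m => 2 * s (m+1) * (2 * s (m+1))) := by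
      apply Summable.of_nonneg_of_le (fun m => by positivity)
        (fun m => ?_) (hsum'.mul_left (4 * (∑' n, s (n+1))))
      have h1 : 0 ≤ s (m+1) := (hspos _).le
      nlinarith [hb m]
    apply tsum_measure_ne_top_of_bound ρ F _ hsum3 (fun m => by positivity)
    intro m
    refine le_trans (hρF (m+1)) ?_
    exact le_of_eq (ENNReal.ofReal_mul (by positivity : (0:ℝ) ≤ 2 * s (m+1))).symm
  have hlimsup0 : ρ (limsup F atTop) = 0 := measure_limsup_atTop_eq_zero htsum
  -- conclusion
  refine measure_mono_null hsub ?_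
  rw [Measure.map_apply hΨmeas hBmeas]
  exact measure_mono_null hFsub hlimsup0
end
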